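/- arXiv:1807.05032 — 6 statements merged into one kernel-verified Lean document; each statement's English description precedes it below -/
import Mathlib

section
/- Every rational-valued class function on S_m can be written as a polynomial with rational coefficients in the cycle-counting functions X₁,...,X_{m−1}; i.e., the algebra homomorphism ρ_m : ℚ[X₁,...,X_{m−1}] → Q_cl(S_m) sending X_i to (g ↦ X_i(g)) is surjective. -/
/-- `cyc g i` is the number of `i`-cycles in the disjoint cycle decomposition of `g`
(fixed points count as `1`-cycles). -/
def cyc {m : ℕ} (g : Equiv.Perm (Fin m)) (i : ℕ) : ℕ :=
  if i = 1 then (Finset.univ.filter fun x => g x = x).card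
  else Multiset.count i g.cycleType

open MvPolynomial

/-- Every rational class function on `S_m` is a polynomial (with rational coefficients) in the
cycle-counting functions `X₁, …, X_{m-1}` (the variable `j : Fin (m-1)` stands for `X_{j+1}`). -/
theorem classFunction_is_polynomial_in_cycleCounts (m : ℕ)
    (f : Equiv.Perm (Fin m) → ℚ) (hf : ∀ g x, f (g * x * g⁻¹) = f x) :
    ∃ P : MvPolynomial (Fin (m - 1)) ℚ,
      ∀ g, MvPolynomial.eval (fun j : Fin (m - 1) => (cyc g ((j : ℕ) + 1) : ℚ)) P = f g := by
  classical
  set n := m - 1 with hn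
  set φ : Equiv.Perm (Fin m) → (Fin n → ℚ) := fun g j => (cyc g ((j : ℕ) + 1) : ℚ) with hφ
  -- key: φ determines f
  have key : ∀ g h : Equiv.Perm (Fin m), φ g = φ h → f g = f h := by
    intro g h hgh
    rcases le_or_gt m 1 with hm | hm
    · have : Subsingleton (Equiv.Perm (Fin m)) := by
        interval_cases m
        · infer_instance
        · infer_instance
      rw [Subsingleton.elim g h]
    · -- m ≥ 2
      have hcyc : ∀ i, 1 ≤ i → i ≤ m - 1 → cyc g i = cyc h i := by
        intro i h1 h2
        have hj : i - 1 < n := by omega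
        have := congrFun hgh ⟨i - 1, hj⟩
        simp only [hφ] at this
        have hi1 : i - 1 + 1 = i := by omega
        rw [hi1] at this
        exact_mod_cast this
      -- support cards equal
      have hsupp : g.support.card = h.support.card := by
        have h1 : ∀ k : Equiv.Perm (Fin m),
            cyc k 1 + k.support.card = m := by
          intro k
          have := Finset.card_filter_add_card_filter_not
            (s := (Finset.univ : Finset (Fin m))) (p := fun x => k x = x)
          simp only [Finset.card_univ, Fintype.card_fin] at this
          rw [cyc, if_pos rfl]
          have hs : k.support = Finset.filter (fun a => ¬ k a = a) Finset.univ := rfl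
          rw [hs]
          exact this
        have := hcyc 1 le_rfl (by omega)
        have e1 := h1 g; have e2 := h1 h
        omega
      have hsum : g.cycleType.sum = h.cycleType.sum := by
        rw [Equiv.Perm.sum_cycleType, Equiv.Perm.sum_cycleType, hsupp]
      have hcount : ∀ i, i ≠ m →
          Multiset.count i g.cycleType = Multiset.count i h.cycleType := by
        intro i him
        rcases lt_or_ge i 2 with hi2 | hi2
        · rw [Multiset.count_eq_zero_of_notMem, Multiset.count_eq_zero_of_notMem]
          · intro hmem; exact absurd (Equiv.Perm.two_le_of_mem_cycleType hmem) (by omega)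
          · intro hmem; exact absurd (Equiv.Perm.two_le_of_mem_cycleType hmem) (by omega)
        rcases le_or_gt i (m - 1) with hile | hgt
        · have := hcyc i (by omega) hile
          rwa [cyc, cyc, if_neg (by omega), if_neg (by omega)] at this
        · -- i > m - 1, i ≠ m, so i > m
          have hbig : ∀ k : Equiv.Perm (Fin m), i ∉ k.cycleType := by
            intro k hmem
            have hle : i ≤ k.cycleType.sum := Multiset.le_sum_of_mem hmem
            rw [Equiv.Perm.sum_cycleType] at hle
            have : k.support.card ≤ m := by
              simpa using Finset.card_le_univ k.support
            omega
          rw [Multiset.count_eq_zero_of_notMem (hbig g),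
            Multiset.count_eq_zero_of_notMem (hbig h)]
      have hct : g.cycleType = h.cycleType := by
        have hfil : g.cycleType.filter (· ≠ m) = h.cycleType.filter (· ≠ m) := by
          ext i
          rw [Multiset.count_filter, Multiset.count_filter]
          split_ifs with hi
          · exact hcount i hi
          · rfl
        have hdec : ∀ s : Multiset ℕ, s.sum = m * s.count m + (s.filter (· ≠ m)).sum := by
          intro s
          conv_lhs => rw [← Multiset.filter_add_not (· = m) s]
          rw [Multiset.sum_add]
          congr 1
          rw [Multiset.filter_eq', Multiset.sum_replicate, smul_eq_mul, mul_comm]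
        have hm' : Multiset.count m g.cycleType = Multiset.count m h.cycleType := by
          have e1 := hdec g.cycleType
          have e2 := hdec h.cycleType
          rw [hfil] at e1
          have : m * Multiset.count m g.cycleType = m * Multiset.count m h.cycleType := by
            omega
          exact Nat.eq_of_mul_eq_mul_left (by omega) this
        ext i
        by_cases hi : i = m
        · rw [hi]; exact hm'
        · exact hcount i hi
      obtain ⟨c, hc⟩ := Equiv.Perm.isConj_iff_cycleType_eq.mpr hct
      have h2 := hf (↑c) g
      rw [show (↑c) * g * (↑c : Equiv.Perm (Fin m))⁻¹ = h by
        rw [hc.eq]; exact mul_inv_cancel_right h ↑c] at h2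
      exact h2.symm
  -- interpolation
  let V : Finset (Fin n → ℚ) := Finset.univ.image φ
  let sel : ∀ {v w : Fin n → ℚ}, v ≠ w → Fin n := fun h => (Function.ne_iff.mp h).choose
  have sel_spec : ∀ {v w : Fin n → ℚ} (h : v ≠ w), v (sel h) ≠ w (sel h) :=
    fun h => (Function.ne_iff.mp h).choose_spec
  let Pv : (Fin n → ℚ) → MvPolynomial (Fin n) ℚ := fun v =>
    ∏ w ∈ V.erase v, if hw : v = w then 1 else
      C ((v (sel hw) - w (sel hw))⁻¹) * (X (sel hw) - C (w (sel hw)))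
  have hPv_self : ∀ v, eval v (Pv v) = 1 := by
    intro v
    rw [map_prod]
    apply Finset.prod_eq_one
    intro w hw
    have hvw : v ≠ w := (Finset.ne_of_mem_erase hw).symm
    rw [dif_neg hvw]
    simp only [map_mul, map_sub, eval_C, eval_X]
    rw [inv_mul_cancel₀ (sub_ne_zero_of_ne (sel_spec hvw))]
  have hPv_ne : ∀ v, ∀ u ∈ V, u ≠ v → eval u (Pv v) = 0 := by
    intro v u hu huv
    rw [map_prod]
    apply Finset.prod_eq_zero (Finset.mem_erase.mpr ⟨huv, hu⟩)
    have hvu : v ≠ u := Ne.symm huv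
    rw [dif_neg hvu]
    simp only [map_mul, map_sub, eval_C, eval_X]
    simp
  let rep : (Fin n → ℚ) → Equiv.Perm (Fin m) := fun v =>
    if h : ∃ g, φ g = v then h.choose else 1
  have hrep : ∀ g, φ (rep (φ g)) = φ g := by
    intro g
    have h : ∃ g', φ g' = φ g := ⟨g, rfl⟩
    simp only [rep, dif_pos h]
    exact h.choose_spec
  refine ⟨∑ v ∈ V, C (f (rep v)) * Pv v, fun g => ?_⟩
  have hgV : φ g ∈ V := Finset.mem_image_of_mem φ (Finset.mem_univ g)
  rw [show (fun j : Fin (m-1) => (cyc g ((j:ℕ)+1) : ℚ)) = φ g from rfl]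
  rw [map_sum]
  rw [Finset.sum_eq_single (φ g)]
  · rw [map_mul, eval_C, hPv_self]
    rw [mul_one]
    exact key _ _ (hrep g)
  · intro v hv hvg
    rw [map_mul, eval_C, hPv_ne v (φ g) hgV (Ne.symm hvg), mul_zero]
  · intro h; exact absurd hgV h
end

section
/- If Q ∈ ℚ[X₁,...,X_N] is a polynomial such that for all sufficiently large m and all g ∈ S_m one has Q(X₁(g),...,X_N(g)) = 0, then Q is the zero polynomial. -/
/-- A polynomial over `ℚ` vanishing at all natural-number points is zero. -/
theorem vanish_nat : ∀ {n : ℕ} (p : MvPolynomial (Fin n) ℚ),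
    (∀ a : Fin n → ℕ, MvPolynomial.eval (fun j => (a j : ℚ)) p = 0) → p = 0 := by
  intro n
  induction n with
  | zero =>
    intro p h
    rw [MvPolynomial.eq_C_of_isEmpty p]
    have := h finZeroElim
    rw [MvPolynomial.eq_C_of_isEmpty p, MvPolynomial.eval_C] at this
    rw [this, map_zero]
  | succ n ih =>
    intro p h
    apply (MvPolynomial.finSuccEquiv ℚ n).injective
    simp only [map_zero]
    refine Polynomial.ext fun k => ?_
    rw [Polynomial.coeff_zero]
    apply ih
    intro a
    have key : ∀ y : ℕ, Polynomial.eval (y : ℚ)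
        (Polynomial.map (MvPolynomial.eval fun j => (a j : ℚ))
          (MvPolynomial.finSuccEquiv ℚ n p)) = 0 := by
      intro y
      rw [← MvPolynomial.eval_eq_eval_mv_eval']
      have : (Fin.cons (y : ℚ) (fun j => (a j : ℚ)) : Fin (n+1) → ℚ)
          = fun j => (((Fin.cons y a : Fin (n+1) → ℕ) j : ℕ) : ℚ) := by
        funext j
        refine Fin.cases ?_ ?_ j <;> simp
      rw [this]
      exact h _
    have hz : Polynomial.map (MvPolynomial.eval fun j => (a j : ℚ))
        (MvPolynomial.finSuccEquiv ℚ n p) = 0 := by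
      apply Polynomial.eq_zero_of_infinite_isRoot
      apply Set.Infinite.mono (s := Set.range (Nat.cast : ℕ → ℚ))
      · rintro x ⟨y, rfl⟩
        exact key y
      · exact Set.infinite_range_of_injective Nat.cast_injective
    have := congrArg (fun q => Polynomial.coeff q k) hz
    simpa using this

/-- Any prescribed vector of cycle counts is realized in some symmetric group `S_m`, `m ≥ M`. -/
theorem exists_perm (N M : ℕ) (a : Fin N → ℕ) :
    ∃ m, M ≤ m ∧ ∃ g : Equiv.Perm (Fin m), ∀ j : Fin N, cyc g ((j : ℕ) + 1) = a j := by
  classical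
  set b : ℕ → ℕ := fun i => if h : i < N then a ⟨i, h⟩ else 0 with hb
  set L : ℕ := N + 2 + M with hL
  set rest : Multiset ℕ := ∑ i ∈ Finset.Ico 2 (N + 1), Multiset.replicate (b (i - 1)) i
    with hrest
  set 𝔪 : Multiset ℕ := L ::ₘ rest with h𝔪
  set m : ℕ := b 0 + 𝔪.sum with hm
  have hsum : 𝔪.sum = L + rest.sum := by rw [h𝔪, Multiset.sum_cons]
  have hMm : M ≤ m := by
    calc M ≤ L := by omega
    _ ≤ L + rest.sum := Nat.le_add_right _ _
    _ = 𝔪.sum := hsum.symm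
    _ ≤ m := Nat.le_add_left _ _
  refine ⟨m, hMm, ?_⟩
  obtain ⟨g, hg⟩ : ∃ g : Equiv.Perm (Fin m), g.cycleType = 𝔪 := by
    rw [Equiv.Perm.exists_with_cycleType_iff]
    constructor
    · rw [Fintype.card_fin]; exact Nat.le_add_left _ _
    · intro x hx
      rw [h𝔪, Multiset.mem_cons] at hx
      rcases hx with rfl | hx
      · omega
      · rw [hrest, Multiset.mem_sum] at hx
        obtain ⟨i, hi, hxi⟩ := hx
        rw [Multiset.eq_of_mem_replicate hxi]
        exact (Finset.mem_Ico.mp hi).1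
  refine ⟨g, fun j => ?_⟩
  have hbj : b (j : ℕ) = a j := by rw [hb]; simp [j.isLt]
  rcases Nat.eq_zero_or_pos (j : ℕ) with hj0 | hj1
  · -- fixed points
    have hfix : (Finset.univ.filter fun x => g x = x).card + g.support.card = m := by
      rw [show g.support = Finset.univ.filter (fun x => ¬ g x = x) from rfl]
      rw [Finset.card_filter_add_card_filter_not, Finset.card_univ, Fintype.card_fin]
    have hsupp : g.support.card = 𝔪.sum := by rw [← Equiv.Perm.sum_cycleType, hg]
    rw [cyc, if_pos (by omega)]
    rw [← hbj, hj0]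
    omega
  · rw [cyc, if_neg (by omega), hg, h𝔪, Multiset.count_cons_of_ne (by omega), hrest,
      Multiset.count_sum']
    rw [Finset.sum_eq_single ((j : ℕ) + 1)]
    · rw [Multiset.count_replicate, if_pos rfl, Nat.add_sub_cancel, hbj]
    · intro i _ hi
      rw [Multiset.count_replicate, if_neg (fun hc => hi hc)]
    · intro hnot
      exfalso
      apply hnot
      rw [Finset.mem_Ico]
      exact ⟨by omega, by have := j.isLt; omega⟩

/-- If a polynomial in `X₁, …, X_N` (the variable `j : Fin N` stands for `X_{j+1}`)
vanishes on the cycle data of all permutations of all sufficiently large symmetric groups,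
then it is the zero polynomial. -/
theorem eq_zero_of_eval_cycleCounts_eventually_zero (N M : ℕ) (Q : MvPolynomial (Fin N) ℚ)
    (h : ∀ m, M ≤ m → ∀ g : Equiv.Perm (Fin m),
      MvPolynomial.eval (fun j : Fin N => (cyc g ((j : ℕ) + 1) : ℚ)) Q = 0) :
    Q = 0 := by
  apply vanish_nat
  intro a
  obtain ⟨m, hMm, g, hg⟩ := exists_perm N M a
  have := h m hMm g
  rw [show (fun j : Fin N => ((cyc g ((j : ℕ) + 1) : ℕ) : ℚ))
      = fun j : Fin N => ((a j : ℕ) : ℚ) from funext fun j => by rw [hg]] at this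
  exact this
end

section
/- For every ℓ ≥ 1, every m ≥ 1, and every g ∈ S_m, the number of ℓ-cycles γ of [1,m] fixed by the conjugation/coordinatewise action of g equals ∑_{d·e = ℓ} φ(d)·(dᵉ/ℓ)·X_d(g)(X_d(g)−1)⋯(X_d(g)−e+1), where φ is Euler's totient function. -/
/-- Injective `ℓ`-tuples of elements of `Fin m`. -/
def Tup (ℓ m : ℕ) : Type := {f : Fin ℓ → Fin m // Function.Injective f}

/-- Two injective tuples are related iff one is a cyclic rotation of the other. -/
def cycRel (ℓ m : ℕ) [NeZero ℓ] (a b : Tup ℓ m) : Prop :=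
  ∃ k : Fin ℓ, ∀ i, b.1 i = a.1 (i + k)

/-- The set `Γ_ℓ^m` of `ℓ`-cycles of `[1, m]`: injective `ℓ`-tuples of elements
of `{1, …, m}` modulo cyclic rotation. -/
def Cyc (ℓ m : ℕ) [NeZero ℓ] : Type := Quot (cycRel ℓ m)

/-- The coordinatewise action of `S_m` on the set of `ℓ`-cycles of `[1, m]`. -/
def act {ℓ m : ℕ} [NeZero ℓ] (g : Equiv.Perm (Fin m)) : Cyc ℓ m → Cyc ℓ m :=
  Quot.map (fun f => ⟨g ∘ f.1, (Equiv.injective g).comp f.2⟩)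
    (by rintro a b ⟨k, hk⟩; exact ⟨k, fun i => congrArg g (hk i)⟩)

open Equiv Equiv.Perm Function Finset

instance (ℓ m : ℕ) : Finite (Tup ℓ m) := Subtype.finite
instance (ℓ m : ℕ) [NeZero ℓ] : Finite (Cyc ℓ m) := Quot.finite _

namespace CFC

variable {m : ℕ} (g : Equiv.Perm (Fin m))

lemma isPeriodicPt_iff_pow {x : Fin m} {n : ℕ} :
    Function.IsPeriodicPt ⇑g n x ↔ (g ^ n) x = x := by
  unfold Function.IsPeriodicPt Function.IsFixedPt
  rw [Equiv.Perm.iterate_eq_pow]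

lemma pow_dvd_iff {x : Fin m} {n : ℕ} :
    (g ^ n) x = x ↔ Function.minimalPeriod ⇑g x ∣ n := by
  rw [← isPeriodicPt_iff_pow, Function.isPeriodicPt_iff_minimalPeriod_dvd]

/-- Points of `Fin m` of exact `g`-period `d`. -/
def P (d : ℕ) : Type := {x : Fin m // Function.minimalPeriod ⇑g x = d}

instance (d : ℕ) : Finite (P g d) := Subtype.finite

variable {g} {d : ℕ}

lemma mem_P_pow (x : P g d) (n : ℕ) :
    Function.minimalPeriod ⇑g ((g ^ n) x.1) = d := by
  have key : ∀ c : ℕ, (g ^ c) ((g ^ n) x.1) = (g ^ n) x.1 ↔ (g ^ c) x.1 = x.1 := by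
    intro c
    have h : (g ^ c) ((g ^ n) x.1) = (g ^ n) ((g ^ c) x.1) := by
      rw [← Equiv.Perm.mul_apply, ← Equiv.Perm.mul_apply, pow_mul_comm]
    rw [h, (g ^ n).injective.eq_iff]
  have hx : ∀ c, (g ^ c) x.1 = x.1 ↔ d ∣ c := fun c => by rw [pow_dvd_iff, x.2]
  apply Nat.dvd_antisymm
  · rw [← pow_dvd_iff]
    rw [key d]
    exact (hx d).mpr dvd_rfl
  · rw [← hx]
    rw [← key]
    exact (pow_dvd_iff g).mpr dvd_rfl

variable (g d) in
/-- Same-orbit relation on points of period `d`. -/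
def R : P g d → P g d → Prop := fun x y => ∃ n : ℕ, (g ^ n) x.1 = y.1

lemma R_equivalence : Equivalence (R g d) where
  refl x := ⟨0, by simp⟩
  symm := by
    rintro x y ⟨n, h⟩
    refine ⟨n * orderOf g - n, ?_⟩
    rw [← h, ← Equiv.Perm.mul_apply, ← pow_add,
      Nat.sub_add_cancel (Nat.le_mul_of_pos_right n (orderOf_pos g)),
      pow_mul' g n (orderOf g), pow_orderOf_eq_one, one_pow, one_apply]
  trans := by
    rintro x y z ⟨n, h⟩ ⟨n', h'⟩
    exact ⟨n' + n, by rw [pow_add, Equiv.Perm.mul_apply, h, h']⟩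

variable (g d) in
/-- The set of `d`-cycles of `g`, as orbits. -/
def O : Type := Quot (R g d)

instance : Finite (O g d) := Quot.finite _

lemma O_eq_iff {x y : P g d} : Quot.mk (R g d) x = Quot.mk (R g d) y ↔ R g d x y := by
  rw [Quot.eq]
  exact Equivalence.eqvGen_iff R_equivalence

lemma pow_mod (x : P g d) (a : ℕ) : (g ^ (a % d)) x.1 = (g ^ a) x.1 := by
  conv_rhs => rw [← Nat.mod_add_div a d, pow_add, Equiv.Perm.mul_apply]
  have h0 : (g ^ (d * (a / d))) x.1 = x.1 :=
    (pow_dvd_iff g).mpr (by rw [x.2]; exact Dvd.intro _ rfl)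
  rw [h0]

lemma pow_inj_mod {x : P g d} {a b : ℕ} (h : (g ^ a) x.1 = (g ^ b) x.1) :
    a % d = b % d := by
  have key : ∀ a b : ℕ, a ≤ b → (g ^ a) x.1 = (g ^ b) x.1 → a % d = b % d := by
    intro a b hab hcomp
    have h1 : (g ^ (b - a)) ((g ^ a) x.1) = (g ^ a) x.1 := by
      rw [← Equiv.Perm.mul_apply, ← pow_add, Nat.sub_add_cancel hab, hcomp]
    rw [pow_dvd_iff, mem_P_pow] at h1
    exact (Nat.modEq_iff_dvd' hab).mpr h1
  rcases le_total a b with hab | hba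
  · exact key a b hab h
  · exact (key b a hba h.symm).symm

noncomputable def fibEquiv (hd : 0 < d) (c : O g d) :
    Fin d ≃ {x : P g d // Quot.mk (R g d) x = c} := by
  apply Equiv.ofBijective
    (fun j => ⟨⟨(g ^ (j : ℕ)) (Quot.out c).1, mem_P_pow _ _⟩,
      ((O_eq_iff (g := g) (d := d)).mpr ⟨(j : ℕ), rfl⟩).symm.trans (Quot.out_eq c)⟩)
  constructor
  · intro j j' hjj
    have h1 : (g ^ (j : ℕ)) (Quot.out c).1 = (g ^ (j' : ℕ)) (Quot.out c).1 := by
      have := congrArg (fun z => z.1.1) hjj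
      exact this
    have := pow_inj_mod h1
    rw [Nat.mod_eq_of_lt j.2, Nat.mod_eq_of_lt j'.2] at this
    exact Fin.ext this
  · rintro ⟨x, hx⟩
    obtain ⟨n, hn⟩ := (O_eq_iff (g := g) (d := d)).mp ((Quot.out_eq c).trans hx.symm)
    refine ⟨⟨n % d, Nat.mod_lt _ hd⟩, ?_⟩
    refine Subtype.ext (Subtype.ext ?_)
    exact (pow_mod (Quot.out c) n).trans hn


lemma support_cycleOf_card {x : Fin m} (hx : g x ≠ x) :
    #(g.cycleOf x).support = Function.minimalPeriod ⇑g x := by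
  have hc : (g.cycleOf x).IsCycle := isCycle_cycleOf g hx
  have hx' : (g.cycleOf x) x ≠ x := by rwa [cycleOf_apply_self]
  rw [← hc.orderOf]
  apply Nat.dvd_antisymm
  · apply orderOf_dvd_of_pow_eq_one
    have h1 : (g ^ Function.minimalPeriod ⇑g x) x = x := (pow_dvd_iff g).mpr dvd_rfl
    rw [← cycleOf_pow_apply_self] at h1
    exact (hc.pow_eq_one_iff' hx').mpr h1
  · rw [← pow_dvd_iff, ← cycleOf_pow_apply_self, pow_orderOf_eq_one, one_apply]

lemma card_O : Nat.card (O g d) = cyc g d := by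
  rcases eq_or_ne d 1 with rfl | hd1
  · -- d = 1 : fixed points
    have hre : ∀ x y : P g 1, R g 1 x y → x = y := by
      rintro x y ⟨n, h⟩
      refine Subtype.ext ?_
      rw [← h, (pow_dvd_iff g).mpr (by rw [x.2]; exact one_dvd n)]
    have e1 : P g 1 ≃ O g 1 := by
      refine Equiv.ofBijective (Quot.mk (R g 1)) ⟨fun x y h => hre x y (O_eq_iff.mp h),
        fun q => Quot.exists_rep q⟩
    have e2 : P g 1 ≃ {x : Fin m // g x = x} :=
      Equiv.subtypeEquivRight fun x => Function.minimalPeriod_eq_one_iff_isFixedPt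
    rw [← Nat.card_congr e1, Nat.card_congr e2, cyc, if_pos rfl, Nat.card_eq_fintype_card,
      Fintype.card_subtype]
  · -- d ≠ 1
    have hd2 : ∀ x : P g d, g x.1 ≠ x.1 := by
      intro x hfix
      exact hd1 (x.2 ▸ Function.minimalPeriod_eq_one_iff_isFixedPt.mpr hfix)
    set s : Finset (Perm (Fin m)) := g.cycleFactorsFinset.filter (fun c => #c.support = d)
      with hs
    have hmem : ∀ x : P g d, g.cycleOf x.1 ∈ s := by
      intro x
      rw [hs, Finset.mem_filter]
      exact ⟨cycleOf_mem_cycleFactorsFinset_iff.mpr (mem_support.mpr (hd2 x)),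
        (support_cycleOf_card (hd2 x)).trans x.2⟩
    have key : O g d ≃ {c // c ∈ s} := by
      refine Equiv.ofBijective (Quot.lift (fun x : P g d => (⟨g.cycleOf x.1, hmem x⟩ : {c // c ∈ s})) ?_) ⟨?_, ?_⟩
      · rintro x y ⟨n, h⟩
        exact Subtype.ext (Equiv.Perm.SameCycle.cycleOf_eq ⟨(n : ℤ), by rw [zpow_natCast]; exact h⟩)
      · intro q q'
        induction q using Quot.ind with | _ x =>
        induction q' using Quot.ind with | _ y =>
        intro h
        have hxy : g.cycleOf x.1 = g.cycleOf y.1 := congrArg Subtype.val h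
        have hsc : Equiv.Perm.SameCycle g x.1 y.1 := by
          have hy : y.1 ∈ (g.cycleOf x.1).support := by
            rw [hxy, mem_support_cycleOf_iff]
            exact ⟨Equiv.Perm.SameCycle.refl _ _, mem_support.mpr (hd2 y)⟩
          exact (mem_support_cycleOf_iff.mp hy).1
        obtain ⟨n, -, -, hn⟩ := hsc.exists_pow_eq g
        exact Quot.sound ⟨n, hn⟩
      · rintro ⟨c, hc⟩
        rw [hs, Finset.mem_filter] at hc
        obtain ⟨hfac, hcard⟩ := hc
        have hcyc : c.IsCycle := (mem_cycleFactorsFinset_iff.mp hfac).1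
        obtain ⟨x, hxsupp⟩ := Finset.card_pos.mp
          (lt_of_lt_of_le Nat.zero_lt_two hcyc.two_le_card_support)
        have hgx : g x ≠ x := by
          rw [← (mem_cycleFactorsFinset_iff.mp hfac).2 x hxsupp]
          exact mem_support.mp hxsupp
        have hceq : c = g.cycleOf x := cycle_is_cycleOf hxsupp hfac
        have hmp : Function.minimalPeriod ⇑g x = d := by
          rw [← support_cycleOf_card hgx, ← hceq]
          exact hcard
        exact ⟨Quot.mk _ ⟨x, hmp⟩, Subtype.ext hceq.symm⟩
    have hcount : cyc g d = s.card := by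
      rw [cyc, if_neg hd1, Equiv.Perm.cycleType_def, Multiset.count_map]
      have h2 : s.card = (Multiset.filter (fun c => #c.support = d) g.cycleFactorsFinset.val).card := by
        rw [hs, Finset.card_def, Finset.filter_val]
      rw [h2]
      congr 1
      apply Multiset.filter_congr
      intro x _
      simp [eq_comm, Function.comp]
    rw [Nat.card_congr key, hcount, Nat.card_eq_fintype_card, Fintype.card_coe]


section KStuff

variable {ℓ : ℕ} [NeZero ℓ] (k : Fin ℓ)

lemma hl_pos : 0 < ℓ := Nat.pos_of_ne_zero (NeZero.ne ℓ)

lemma e_pos : 0 < Nat.gcd ℓ k.val := Nat.gcd_pos_of_pos_left _ hl_pos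

lemma e_le : Nat.gcd ℓ k.val ≤ ℓ := Nat.le_of_dvd hl_pos (Nat.gcd_dvd_left ℓ k.val)

lemma d_pos : 0 < ℓ / Nat.gcd ℓ k.val :=
  Nat.div_pos (e_le k) (e_pos k)

lemma ed_eq : Nat.gcd ℓ k.val * (ℓ / Nat.gcd ℓ k.val) = ℓ :=
  Nat.mul_div_cancel' (Nat.gcd_dvd_left ℓ k.val)

lemma val_nsmul (n : ℕ) (a : Fin ℓ) : ((n • a : Fin ℓ)).val = n * a.val % ℓ := by
  induction n with
  | zero => simp
  | succ n ih =>
    rw [succ_nsmul, Fin.val_add, ih, Nat.mod_add_mod, Nat.succ_mul]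

lemma nat_key_dvd (L Kv n : ℕ) (hL : 0 < L) : L ∣ n * Kv ↔ (L / Nat.gcd L Kv) ∣ n := by
  set e := Nat.gcd L Kv with he
  have hepos : 0 < e := Nat.gcd_pos_of_pos_left _ hL
  obtain ⟨d', hd'⟩ : e ∣ L := Nat.gcd_dvd_left L Kv
  obtain ⟨K', hK'⟩ : e ∣ Kv := Nat.gcd_dvd_right L Kv
  have hdiv : L / e = d' := by rw [hd', Nat.mul_div_cancel_left _ hepos]
  have hcop : Nat.Coprime d' K' := by
    have h := Nat.coprime_div_gcd_div_gcd (m := L) (n := Kv) hepos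
    rw [← he] at h
    rwa [hdiv, hK', Nat.mul_div_cancel_left K' hepos] at h
  rw [hdiv, hd', hK']
  rw [show e * d' = d' * e from mul_comm _ _, show n * (e * K') = n * K' * e by ring,
      Nat.mul_dvd_mul_iff_right hepos]
  exact ⟨fun h => hcop.dvd_of_dvd_mul_right h, fun h => h.mul_right K'⟩

lemma key_dvd (n : ℕ) : ℓ ∣ n * k.val ↔ (ℓ / Nat.gcd ℓ k.val) ∣ n :=
  nat_key_dvd ℓ k.val n hl_pos

lemma nsmul_k_eq_zero (n : ℕ) : n • k = 0 ↔ (ℓ / Nat.gcd ℓ k.val) ∣ n := by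
  rw [Fin.ext_iff, val_nsmul, Fin.val_zero, ← Nat.dvd_iff_mod_eq_zero, key_dvd]

lemma nsmul_k_eq_iff (a b : ℕ) :
    a • k = b • k ↔ a % (ℓ / Nat.gcd ℓ k.val) = b % (ℓ / Nat.gcd ℓ k.val) := by
  set d := ℓ / Nat.gcd ℓ k.val with hdd
  have haux : ∀ a b : ℕ, a ≤ b → a • k = b • k → d ∣ b - a := by
    intro a b hab h
    have h1 : (b - a) • k + a • k = 0 + a • k := by
      rw [← add_nsmul, Nat.sub_add_cancel hab, h, zero_add]
    exact (nsmul_k_eq_zero k _).mp (add_right_cancel h1)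
  constructor
  · intro h
    rcases le_total a b with hab | hba
    · exact (Nat.modEq_iff_dvd' hab).mpr (haux a b hab h)
    · exact ((Nat.modEq_iff_dvd' hba).mpr (haux b a hba h.symm)).symm
  · intro h
    have hmod : ∀ a : ℕ, a • k = (a % d) • k := by
      intro a
      have hz : (d * (a / d)) • k = 0 :=
        (nsmul_k_eq_zero k _).mpr (dvd_mul_right d (a / d))
      conv_lhs => rw [← Nat.mod_add_div a d]
      rw [add_nsmul, hz, add_zero]
    rw [hmod a, hmod b, h]

lemma exists_nsmul_val (s : ℕ) (hs : Nat.gcd ℓ k.val * s < ℓ) :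
    ∃ n < ℓ / Nat.gcd ℓ k.val,
      ((n • k : Fin ℓ)).val = Nat.gcd ℓ k.val * s := by
  set e := Nat.gcd ℓ k.val with he
  set d := ℓ / e with hdd
  have hepos : 0 < e := e_pos k
  have hed : e * d = ℓ := ed_eq k
  have hdvd : ∀ n : ℕ, e ∣ ((n • k : Fin ℓ)).val := by
    intro n
    rw [val_nsmul]
    exact (Nat.dvd_mod_iff (Nat.gcd_dvd_left ℓ k.val)).mpr
      ((Nat.gcd_dvd_right ℓ k.val).mul_left n)
  have hlt : ∀ n : ℕ, ((n • k : Fin ℓ)).val / e < d := by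
    intro n
    apply Nat.div_lt_of_lt_mul
    rw [hed]
    exact (n • k).2
  set Ψ : Fin d → Fin d := fun n => ⟨(((n : ℕ) • k : Fin ℓ)).val / e, hlt n.1⟩ with hΨ
  have hΨinj : Function.Injective Ψ := by
    intro n n' h
    have hv : (((n : ℕ) • k : Fin ℓ)).val / e = (((n' : ℕ) • k : Fin ℓ)).val / e :=
      congrArg Fin.val h
    have h1 : (((n : ℕ) • k : Fin ℓ)).val = (((n' : ℕ) • k : Fin ℓ)).val := by
      calc (((n : ℕ) • k : Fin ℓ)).val = e * ((((n : ℕ) • k : Fin ℓ)).val / e) :=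
            (Nat.mul_div_cancel' (hdvd n.1)).symm
        _ = e * ((((n' : ℕ) • k : Fin ℓ)).val / e) := by rw [hv]
        _ = (((n' : ℕ) • k : Fin ℓ)).val := Nat.mul_div_cancel' (hdvd n'.1)
    have h2 := (nsmul_k_eq_iff k n.1 n'.1).mp (Fin.ext h1)
    rw [Nat.mod_eq_of_lt n.2, Nat.mod_eq_of_lt n'.2] at h2
    exact Fin.ext h2
  have hΨsurj : Function.Surjective Ψ := Finite.surjective_of_injective hΨinj
  have hsd : s < d := by
    by_contra hsd
    push_neg at hsd
    have h3 : ℓ ≤ e * s := by rw [← hed]; exact Nat.mul_le_mul_left e hsd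
    omega
  obtain ⟨n, hn⟩ := hΨsurj ⟨s, hsd⟩
  refine ⟨n.1, n.2, ?_⟩
  have hv : (((n : ℕ) • k : Fin ℓ)).val / e = s := congrArg Fin.val hn
  calc (((n : ℕ) • k : Fin ℓ)).val = e * ((((n : ℕ) • k : Fin ℓ)).val / e) :=
        (Nat.mul_div_cancel' (hdvd n.1)).symm
    _ = e * s := by rw [hv]

lemma decomp (i : Fin ℓ) : ∃ n < ℓ / Nat.gcd ℓ k.val,
    i = Fin.castLE (e_le k) ⟨i.val % Nat.gcd ℓ k.val, Nat.mod_lt _ (e_pos k)⟩ + n • k := by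
  set e := Nat.gcd ℓ k.val with he
  have hs : e * (i.val / e) < ℓ := lt_of_le_of_lt (by rw [mul_comm]; exact Nat.div_mul_le_self _ _) i.2
  obtain ⟨n, hnd, hnval⟩ := exists_nsmul_val k (i.val / e) hs
  refine ⟨n, hnd, ?_⟩
  apply Fin.ext
  rw [Fin.val_add, hnval]
  show i.val = (i.val % e + e * (i.val / e)) % ℓ
  rw [Nat.mod_add_div, Nat.mod_eq_of_lt i.2]

end KStuff

section Tuples

variable {ℓ m : ℕ} [NeZero ℓ] (g : Equiv.Perm (Fin m)) (k : Fin ℓ)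

/-- Injective tuples satisfying the rotation-by-`k` equivariance. -/
def T : Type := {f : Tup ℓ m // ∀ i, g (f.1 i) = f.1 (i + k)}

instance : Finite (T g k) := Subtype.finite

lemma tup_pow_apply (f : Tup ℓ m) (hf : ∀ i, g (f.1 i) = f.1 (i + k)) (n : ℕ) (i : Fin ℓ) :
    (g ^ n) (f.1 i) = f.1 (i + n • k) := by
  induction n with
  | zero => simp
  | succ n ih =>
    rw [pow_succ', Equiv.Perm.mul_apply, ih, hf, succ_nsmul, ← add_assoc]

lemma tup_period (f : Tup ℓ m) (hf : ∀ i, g (f.1 i) = f.1 (i + k)) (i : Fin ℓ) :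
    Function.minimalPeriod ⇑g (f.1 i) = ℓ / Nat.gcd ℓ k.val := by
  have hiff : ∀ n, (g ^ n) (f.1 i) = f.1 i ↔ (ℓ / Nat.gcd ℓ k.val) ∣ n := by
    intro n
    rw [tup_pow_apply g k f hf n i, f.2.eq_iff, add_eq_left, nsmul_k_eq_zero]
  apply Nat.dvd_antisymm
  · rw [← pow_dvd_iff g]
    exact (hiff _).mpr dvd_rfl
  · exact (hiff _).mp ((pow_dvd_iff g).mpr dvd_rfl)

/-- The forward map from equivariant tuples to distinct-orbit families of
points of exact period `d`. -/
noncomputable def F3 : T g k →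
    {h : Fin (Nat.gcd ℓ k.val) → P g (ℓ / Nat.gcd ℓ k.val) //
      Function.Injective fun j => Quot.mk (R g (ℓ / Nat.gcd ℓ k.val)) (h j)} := by
  refine fun f => ⟨fun j => ⟨f.1.1 (Fin.castLE (e_le k) j), tup_period g k f.1 f.2 _⟩, ?_⟩
  intro j j' hjj
  obtain ⟨n, hn⟩ := O_eq_iff.mp hjj
  rw [tup_pow_apply g k f.1 f.2 n (Fin.castLE (e_le k) j)] at hn
  have hAB := f.1.2 hn
  have hv := congrArg Fin.val hAB
  rw [Fin.val_add, val_nsmul] at hv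
  have hdvd2 : Nat.gcd ℓ k.val ∣ n * k.val % ℓ :=
    (Nat.dvd_mod_iff (Nat.gcd_dvd_left ℓ k.val)).mpr ((Nat.gcd_dvd_right ℓ k.val).mul_left n)
  obtain ⟨t, ht⟩ := hdvd2
  rw [ht] at hv
  apply Fin.ext
  have h0 : ((j : ℕ) + Nat.gcd ℓ k.val * t) % ℓ = (j' : ℕ) := hv
  have h1 : ((j : ℕ) + Nat.gcd ℓ k.val * t) % ℓ % Nat.gcd ℓ k.val
      = (j' : ℕ) % Nat.gcd ℓ k.val := by
    rw [h0]
  rwa [Nat.mod_mod_of_dvd _ (Nat.gcd_dvd_left ℓ k.val), Nat.add_mul_mod_self_left,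
    Nat.mod_eq_of_lt j.2, Nat.mod_eq_of_lt j'.2] at h1

lemma F3_bijective : Function.Bijective (F3 g k) := by
  set e := Nat.gcd ℓ k.val with he
  set d := ℓ / e with hdd
  constructor
  · -- injective
    intro f f' hff
    have hcomp : ∀ j : Fin e, f.1.1 (Fin.castLE (e_le k) j) = f'.1.1 (Fin.castLE (e_le k) j) :=
      fun j => congrArg (fun h => ((h.1 j).1 : Fin m)) hff
    apply Subtype.ext
    apply Subtype.ext
    funext i
    obtain ⟨n, hnd, hni⟩ := decomp k i
    rw [hni, ← tup_pow_apply g k f.1 f.2, ← tup_pow_apply g k f'.1 f'.2, hcomp]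
  · -- surjective
    rintro ⟨h, hinj⟩
    have hepos : 0 < e := e_pos k
    have hchoice : ∀ i : Fin ℓ, ∃ n, n < d ∧ ((n • k : Fin ℓ)).val = e * (i.val / e) := by
      intro i
      have hs : e * (i.val / e) < ℓ :=
        lt_of_le_of_lt (by rw [mul_comm]; exact Nat.div_mul_le_self _ _) i.2
      obtain ⟨n, hn1, hn2⟩ := exists_nsmul_val k (i.val / e) hs
      exact ⟨n, hn1, hn2⟩
    choose nn hnd hnval using hchoice
    set r : Fin ℓ → Fin e := fun i => ⟨i.val % e, Nat.mod_lt _ hepos⟩ with hr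
    set F : Fin ℓ → Fin m := fun i => (g ^ nn i) (h (r i)).1 with hF
    have hmemF : ∀ i : Fin ℓ, Function.minimalPeriod ⇑g (F i) = d := fun i =>
      mem_P_pow (h (r i)) (nn i)
    have hdecomp : ∀ i : Fin ℓ, i = Fin.castLE (e_le k) (r i) + nn i • k := by
      intro i
      apply Fin.ext
      rw [Fin.val_add, hnval i]
      show i.val = (i.val % e + e * (i.val / e)) % ℓ
      rw [Nat.mod_add_div, Nat.mod_eq_of_lt i.2]
    have hper : ∀ (x : P g d) (a b : ℕ), a % d = b % d → (g ^ a) x.1 = (g ^ b) x.1 := by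
      intro x a b hab
      rw [← pow_mod x a, ← pow_mod x b, hab]
    have hequi : ∀ i : Fin ℓ, g (F i) = F (i + k) := by
      intro i
      have hedl : e ∣ ℓ := Nat.gcd_dvd_left ℓ k.val
      have hekr : e ∣ k.val := Nat.gcd_dvd_right ℓ k.val
      have hre : r (i + k) = r i := by
        apply Fin.ext
        show (i + k).val % e = i.val % e
        rw [Fin.val_add, Nat.mod_mod_of_dvd _ hedl]
        obtain ⟨u, hu⟩ := hekr
        rw [hu, mul_comm e u, Nat.add_mul_mod_self_right]
      have hmod : (nn i + 1) % d = nn (i + k) % d := by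
        have e1 : i + k = Fin.castLE (e_le k) (r i) + (nn i + 1) • k := by
          conv_lhs => rw [hdecomp i]
          rw [succ_nsmul, add_assoc]
        have e2 : i + k = Fin.castLE (e_le k) (r i) + nn (i + k) • k := by
          conv_lhs => rw [hdecomp (i + k)]
          rw [hre]
        exact (nsmul_k_eq_iff k _ _).mp (add_left_cancel (e1.symm.trans e2))
      show g ((g ^ nn i) (h (r i)).1) = (g ^ nn (i + k)) (h (r (i + k))).1
      rw [hre, ← Equiv.Perm.mul_apply, ← pow_succ']
      exact hper (h (r i)) (nn i + 1) (nn (i + k)) hmod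
    have hFinj : Function.Injective F := by
      intro i il hii
      have hz : Quot.mk (R g d) (h (r i)) = Quot.mk (R g d) (h (r il)) := by
        have hz1 : Quot.mk (R g d) (h (r i)) = Quot.mk (R g d) ⟨F i, hmemF i⟩ :=
          Quot.sound ⟨nn i, rfl⟩
        have hz2 : Quot.mk (R g d) (h (r il)) = Quot.mk (R g d) ⟨F il, hmemF il⟩ :=
          Quot.sound ⟨nn il, rfl⟩
        rw [hz1, hz2]
        congr 1
        exact Subtype.ext hii
      have hrr : r i = r il := hinj hz
      have hnn : nn i = nn il := by
        have hx : (g ^ nn i) (h (r i)).1 = (g ^ nn il) (h (r i)).1 := by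
          conv_rhs => rw [hrr]
          exact hii
        have := pow_inj_mod hx
        rwa [Nat.mod_eq_of_lt (hnd i), Nat.mod_eq_of_lt (hnd il)] at this
      rw [hdecomp i, hdecomp il, hrr, hnn]
    refine ⟨⟨⟨F, hFinj⟩, fun i => hequi i⟩, ?_⟩
    apply Subtype.ext
    funext j
    apply Subtype.ext
    show F (Fin.castLE (e_le k) j) = (h j).1
    have hrj : r (Fin.castLE (e_le k) j) = j := Fin.ext (Nat.mod_eq_of_lt j.2)
    have hnj : nn (Fin.castLE (e_le k) j) = 0 := by
      have hv := hnval (Fin.castLE (e_le k) j)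
      rw [show ((Fin.castLE (e_le k) j : Fin ℓ)).val = (j : ℕ) from rfl,
        Nat.div_eq_of_lt j.2, mul_zero] at hv
      have h0 : (nn (Fin.castLE (e_le k) j)) • k = 0 := Fin.ext (by rw [hv]; rfl)
      exact Nat.eq_zero_of_dvd_of_lt ((nsmul_k_eq_zero k _).mp h0) (hnd _)
    show (g ^ nn (Fin.castLE (e_le k) j)) (h (r (Fin.castLE (e_le k) j))).1 = (h j).1
    rw [hnj, hrj, pow_zero, Equiv.Perm.one_apply]

end Tuples

section Count

variable {m : ℕ} {g : Equiv.Perm (Fin m)} {d : ℕ}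

lemma card_inj_fun (hd : 0 < d) (e : ℕ) :
    Nat.card {h : Fin e → P g d // Function.Injective fun j => Quot.mk (R g d) (h j)} =
      (Nat.card (O g d)).descFactorial e * d ^ e := by
  classical
  set Q : P g d → O g d := Quot.mk (R g d) with hQ
  have E1 : {h : Fin e → P g d // Function.Injective fun j => Q (h j)} ≃
      {p : Fin e → Σ c : O g d, {x : P g d // Q x = c} //
        Function.Injective fun j => (p j).1} :=
    Equiv.subtypeEquiv (Equiv.piCongrRight fun _ => (Equiv.sigmaFiberEquiv Q).symm)
      (fun h => Iff.rfl)
  let E2 : (Σ c : O g d, {x : P g d // Q x = c}) ≃ O g d × Fin d :=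
    (Equiv.sigmaCongrRight fun c => (fibEquiv hd c).symm).trans
      (Equiv.sigmaEquivProd _ _)
  have hE2 : ∀ z, (E2 z).1 = z.1 := by rintro ⟨c, x⟩; rfl
  have E3 : {p : Fin e → Σ c : O g d, {x : P g d // Q x = c} //
        Function.Injective fun j => (p j).1} ≃
      {q : Fin e → O g d × Fin d // Function.Injective fun j => (q j).1} := by
    refine Equiv.subtypeEquiv (Equiv.piCongrRight fun _ => E2) (fun p => ?_)
    constructor
    · intro hp j j' hjj
      exact hp (by simpa [hE2] using hjj)
    · intro hp j j' hjj
      exact hp (by simpa [hE2] using hjj)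
  have E4 : {q : Fin e → O g d × Fin d // Function.Injective fun j => (q j).1} ≃
      {w : (Fin e → O g d) × (Fin e → Fin d) // Function.Injective w.1} :=
    Equiv.subtypeEquiv (Equiv.arrowProdEquivProdArrow _ _ _) (fun q => Iff.rfl)
  have E5 : {w : (Fin e → O g d) × (Fin e → Fin d) // Function.Injective w.1} ≃
      {v : Fin e → O g d // Function.Injective v} × (Fin e → Fin d) :=
    Equiv.prodSubtypeFstEquivSubtypeProd
  have E6 : {v : Fin e → O g d // Function.Injective v} ≃ (Fin e ↪ O g d) :=
    Equiv.subtypeInjectiveEquivEmbedding _ _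
  have := Fintype.ofFinite (O g d)
  refine (Nat.card_congr (((((E1.trans E3).trans E4).trans E5).trans
    (Equiv.prodCongr E6 (Equiv.refl _))))).trans ?_
  rw [Nat.card_prod]
  rw [Nat.card_eq_fintype_card (α := Fin e ↪ O g d), Fintype.card_embedding_eq,
    Fintype.card_fin, Nat.card_fun]
  simp [Nat.card_eq_fintype_card]

end Count

section CardT

variable {ℓ m : ℕ} [NeZero ℓ] (g : Equiv.Perm (Fin m)) (k : Fin ℓ)

lemma card_T : Nat.card (T g k) =
    (ℓ / Nat.gcd ℓ k.val) ^ (Nat.gcd ℓ k.val) *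
      Nat.descFactorial (cyc g (ℓ / Nat.gcd ℓ k.val)) (Nat.gcd ℓ k.val) := by
  rw [Nat.card_eq_of_bijective (F3 g k) (F3_bijective g k)]
  rw [card_inj_fun (d_pos k), card_O, mul_comm]

end CardT

section Glue

variable {ℓ m : ℕ} [NeZero ℓ] (g : Equiv.Perm (Fin m))

lemma cycRel_equivalence : Equivalence (cycRel ℓ m) where
  refl a := ⟨0, fun i => by rw [add_zero]⟩
  symm := by
    rintro a b ⟨kk, hk⟩
    exact ⟨-kk, fun i => by rw [hk (i + -kk), neg_add_cancel_right]⟩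
  trans := by
    rintro a b c ⟨k1, h1⟩ ⟨k2, h2⟩
    exact ⟨k2 + k1, fun i => by rw [h2, h1, add_assoc]⟩

lemma cyc_mk_eq_iff {a b : Tup ℓ m} :
    (Quot.mk (cycRel ℓ m) a : Cyc ℓ m) = Quot.mk _ b ↔ cycRel ℓ m a b := by
  rw [Quot.eq]
  exact Equivalence.eqvGen_iff cycRel_equivalence

/-- Rotation of a tuple. -/
def rot (a : Tup ℓ m) (kk : Fin ℓ) : Tup ℓ m :=
  ⟨fun i => a.1 (i + kk), a.2.comp (add_left_injective kk)⟩

lemma rot_mk (a : Tup ℓ m) (kk : Fin ℓ) :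
    Quot.mk (cycRel ℓ m) (rot a kk) = Quot.mk _ a :=
  (Quot.sound ⟨kk, fun _ => rfl⟩).symm

lemma act_mk (a : Tup ℓ m) : act g (Quot.mk _ a) =
    Quot.mk _ (⟨g ∘ a.1, (Equiv.injective g).comp a.2⟩ : Tup ℓ m) := rfl

lemma out_equiv (c : Cyc ℓ m) (hc : act g c = c) :
    ∃ k₀ : Fin ℓ, ∀ i, g ((Quot.out c).1 i) = (Quot.out c).1 (i + k₀) := by
  have h2 := act_mk g (Quot.out c)
  rw [Quot.out_eq c, hc] at h2
  have h1 : Quot.mk (cycRel ℓ m)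
      (⟨g ∘ (Quot.out c).1, (Equiv.injective g).comp (Quot.out c).2⟩ : Tup ℓ m) =
      Quot.mk _ (Quot.out c) := h2.symm.trans (Quot.out_eq c).symm
  obtain ⟨k₀, hk₀⟩ := cycRel_equivalence.symm (cyc_mk_eq_iff.mp h1)
  exact ⟨k₀, fun i => hk₀ i⟩

noncomputable def Φ : {x : Cyc ℓ m // act g x = x} × Fin ℓ →
    {f : Tup ℓ m // ∃ k : Fin ℓ, ∀ i, g (f.1 i) = f.1 (i + k)} :=
  fun p => ⟨rot (Quot.out p.1.1) p.2, by
    obtain ⟨k₀, hk₀⟩ := out_equiv g p.1.1 p.1.2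
    exact ⟨k₀, fun i => by
      show g ((Quot.out p.1.1).1 (i + p.2)) = (Quot.out p.1.1).1 (i + k₀ + p.2)
      rw [hk₀ (i + p.2), add_right_comm]⟩⟩

lemma Φ_bijective : Function.Bijective (Φ (ℓ := ℓ) g) := by
  constructor
  · rintro ⟨⟨c, hc⟩, kk⟩ ⟨⟨c', hc'⟩, kk'⟩ hpq
    have hval : rot (Quot.out c) kk = rot (Quot.out c') kk' := congrArg Subtype.val hpq
    have hcc : c = c' := by
      rw [← Quot.out_eq c, ← Quot.out_eq c', ← rot_mk (Quot.out c) kk,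
        ← rot_mk (Quot.out c') kk', hval]
    subst hcc
    have hkk : kk = kk' := by
      have h0 := congrArg (fun t : Tup ℓ m => t.1 0) hval
      have h1 := (Quot.out c).2 h0
      rwa [zero_add, zero_add] at h1
    subst hkk
    rfl
  · rintro ⟨f, k₀, hk₀⟩
    have hc : act g (Quot.mk _ f) = Quot.mk _ f := by
      rw [act_mk]
      exact (Quot.sound ⟨k₀, hk₀⟩).symm
    obtain ⟨kk, hkk⟩ := cyc_mk_eq_iff.mp (Quot.out_eq (Quot.mk (cycRel ℓ m) f))
    refine ⟨(⟨Quot.mk _ f, hc⟩, kk), ?_⟩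
    apply Subtype.ext
    apply Subtype.ext
    funext i
    exact (hkk i).symm

lemma step1 : ℓ * Nat.card {x : Cyc ℓ m // act g x = x} =
    Nat.card {f : Tup ℓ m // ∃ k : Fin ℓ, ∀ i, g (f.1 i) = f.1 (i + k)} := by
  have h := Nat.card_eq_of_bijective (Φ (ℓ := ℓ) g) (Φ_bijective g)
  rw [Nat.card_prod, Nat.card_eq_fintype_card (α := Fin ℓ), Fintype.card_fin, mul_comm] at h
  exact h

lemma step2 : Nat.card {f : Tup ℓ m // ∃ k : Fin ℓ, ∀ i, g (f.1 i) = f.1 (i + k)} =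
    ∑ kk : Fin ℓ, Nat.card (T g kk) := by
  classical
  have hΨ : Function.Bijective (fun s : Σ kk : Fin ℓ, T g kk =>
      (⟨s.2.1, s.1, s.2.2⟩ : {f : Tup ℓ m // ∃ k : Fin ℓ, ∀ i, g (f.1 i) = f.1 (i + k)})) := by
    constructor
    · rintro ⟨k1, f1, h1⟩ ⟨k2, f2, h2⟩ hh
      have hf : f1 = f2 := congrArg Subtype.val hh
      subst hf
      have hk : k1 = k2 := by
        have e1 := h1 0
        have e2 := h2 0
        have h3 := f1.2 (e1.symm.trans e2)
        rwa [zero_add, zero_add] at h3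
      subst hk
      rfl
    · rintro ⟨f, k0, h0⟩
      exact ⟨⟨k0, f, h0⟩, rfl⟩
  rw [← Nat.card_eq_of_bijective _ hΨ]
  letI : ∀ kk : Fin ℓ, Fintype (T g kk) := fun kk => Fintype.ofFinite _
  rw [Nat.card_eq_fintype_card, Fintype.card_sigma]
  exact Finset.sum_congr rfl fun kk _ => (Nat.card_eq_fintype_card).symm

lemma reindex (G : ℕ → ℕ) :
    ∑ kk : Fin ℓ, G (Nat.gcd ℓ kk.val) = ∑ d ∈ ℓ.divisors, Nat.totient d * G (ℓ / d) := by
  classical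
  rw [Fin.sum_univ_eq_sum_range (fun i => G (Nat.gcd ℓ i))]
  rw [← Finset.sum_fiberwise_of_maps_to (g := fun i => Nat.gcd ℓ i) (t := ℓ.divisors)
    (fun i _ => Nat.mem_divisors.mpr ⟨Nat.gcd_dvd_left ℓ i, NeZero.ne ℓ⟩)
    (fun i => G (Nat.gcd ℓ i))]
  have step : ∀ e ∈ ℓ.divisors,
      (∑ i ∈ (Finset.range ℓ).filter (fun i => Nat.gcd ℓ i = e), G (Nat.gcd ℓ i)) =
        Nat.totient (ℓ / e) * G e := by
    intro e he
    rw [Finset.sum_congr rfl (fun i hi => by rw [(Finset.mem_filter.mp hi).2]),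
      Finset.sum_const, smul_eq_mul, ← Nat.totient_div_of_dvd (Nat.dvd_of_mem_divisors he)]
  rw [Finset.sum_congr rfl step, ← Nat.sum_div_divisors ℓ (fun e => Nat.totient (ℓ / e) * G e)]
  exact Finset.sum_congr rfl fun d hd => by
    rw [Nat.div_div_self (Nat.dvd_of_mem_divisors hd) (NeZero.ne ℓ)]

end Glue

end CFC

/-- The number of `ℓ`-cycles of `[1, m]` fixed by `g ∈ S_m` is
`∑_{d·e = ℓ} φ(d) (dᵉ/ℓ) X_d(g)(X_d(g)−1)⋯(X_d(g)−e+1)`. -/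
theorem card_fixed_cyc (ℓ m : ℕ) [NeZero ℓ] (hm : 0 < m) (g : Equiv.Perm (Fin m)) :
    ℓ * Nat.card {x : Cyc ℓ m // act g x = x} =
      ∑ d ∈ ℓ.divisors, Nat.totient d * d ^ (ℓ / d) * Nat.descFactorial (cyc g d) (ℓ / d) := by
  classical
  rw [CFC.step1 g, CFC.step2 g]
  rw [Finset.sum_congr rfl (fun kk _ => CFC.card_T g kk)]
  rw [CFC.reindex (fun e => (ℓ / e) ^ e * Nat.descFactorial (cyc g (ℓ / e)) e)]
  apply Finset.sum_congr rfl
  intro d hd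
  rw [Nat.div_div_self (Nat.dvd_of_mem_divisors hd) (NeZero.ne ℓ), mul_assoc]
end

section
/- For ℓ > 1 and g ∈ S_m, the number of ℓ-cycles γ ∈ S_m (as permutations with one nontrivial cycle of length ℓ) that commute with g equals ∑_{d·e = ℓ} φ(d)·(dᵉ/ℓ)·X_d(g)(X_d(g)−1)⋯(X_d(g)−e+1). -/
open Equiv Equiv.Perm Finset

set_option linter.unusedSectionVars false

namespace CCC

variable {m : ℕ} (g : Equiv.Perm (Fin m))

/-- The orbit of `x` under `g`, as a `Finset` (a singleton for fixed points). -/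
def orb (x : Fin m) : Finset (Fin m) :=
  if g x = x then {x} else (g.cycleOf x).support

/-- The size of the orbit of `x` under `g`. -/
def per (x : Fin m) : ℕ := (orb g x).card

theorem mem_orb {x y : Fin m} : y ∈ orb g x ↔ g.SameCycle x y := by
  unfold orb
  split_ifs with h
  · simp only [Finset.mem_singleton]
    constructor
    · rintro rfl; exact Equiv.Perm.SameCycle.refl _ _
    · rintro ⟨i, rfl⟩; rw [zpow_apply_eq_self_of_apply_eq_self h]
  · rw [Equiv.Perm.mem_support_cycleOf_iff' h]

theorem self_mem_orb (x : Fin m) : x ∈ orb g x := (mem_orb g).2 (Equiv.Perm.SameCycle.refl _ _)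

theorem per_pos (x : Fin m) : 0 < per g x :=
  Finset.card_pos.2 ⟨x, self_mem_orb g x⟩

theorem orb_eq_of_sameCycle {x y : Fin m} (h : g.SameCycle x y) : orb g x = orb g y := by
  ext z
  rw [mem_orb, mem_orb]
  exact ⟨fun hz => h.symm.trans hz, fun hz => h.trans hz⟩

theorem pow_apply_eq_pow_apply_iff (x : Fin m) {a b : ℕ} :
    (g ^ a) x = (g ^ b) x ↔ a ≡ b [MOD per g x] := by
  unfold per orb
  split_ifs with h
  · simp only [Finset.card_singleton, Nat.modEq_one, iff_true,
      Equiv.Perm.pow_apply_eq_self_of_apply_eq_self h]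
  · exact (g.isCycleOn_support_cycleOf x).pow_apply_eq_pow_apply
      (by rw [Equiv.Perm.mem_support_cycleOf_iff' h])

theorem pow_per_apply (x : Fin m) : (g ^ per g x) x = x := by
  have := (pow_apply_eq_pow_apply_iff g x (a := per g x) (b := 0)).2
    (Nat.modEq_zero_iff_dvd.2 dvd_rfl)
  simpa using this

theorem per_eq_of {x : Fin m} {d : ℕ} (hd : 0 < d) (h1 : (g ^ d) x = x)
    (h2 : ∀ a < d, ∀ b < d, (g ^ a) x = (g ^ b) x → a = b) : per g x = d := by
  have hdvd : per g x ∣ d := by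
    have : (g ^ d) x = (g ^ 0) x := by simpa using h1
    have := (pow_apply_eq_pow_apply_iff g x).1 this
    simpa [Nat.modEq_zero_iff_dvd] using this
  rcases lt_trichotomy (per g x) d with hlt | heq | hgt
  · exfalso
    have h0 : (g ^ per g x) x = (g ^ 0) x := by simpa using pow_per_apply g x
    have := h2 _ hlt _ hd h0
    exact (per_pos g x).ne' this
  · exact heq
  · exact absurd (Nat.le_of_dvd hd hdvd) (not_le.2 hgt)

theorem sameCycle_iff_exists_pow {x y : Fin m} :
    g.SameCycle x y ↔ ∃ n : ℕ, (g ^ n) x = y := by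
  constructor
  · intro h
    obtain ⟨i, _, _, hi⟩ := h.exists_pow_eq g
    exact ⟨i, hi⟩
  · rintro ⟨n, rfl⟩
    exact ⟨(n : ℤ), by rw [zpow_natCast]⟩


theorem per_eq_one_iff {x : Fin m} : per g x = 1 ↔ g x = x := by
  unfold per orb
  split_ifs with h
  · simpa using h
  · simp only [h, iff_false]
    have := Equiv.Perm.two_le_card_support_cycleOf_iff.2 h
    omega

theorem orb_of_not_fixed {x : Fin m} (h : g x ≠ x) : orb g x = (g.cycleOf x).support := by
  rw [orb, if_neg h]

theorem filter_per_card (d : ℕ) (hd : d ≠ 0) :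
    (Finset.univ.filter fun x => per g x = d).card = d * cyc g d := by
  rcases eq_or_ne d 1 with rfl | hd1
  · rw [cyc, if_pos rfl, one_mul]
    congr 1
    ext x
    simp [per_eq_one_iff]
  · have hd2 : 2 ≤ d := by omega
    have hset : (Finset.univ.filter fun x => per g x = d) =
        (g.cycleFactorsFinset.filter fun c => c.support.card = d).biUnion
          Equiv.Perm.support := by
      ext x
      simp only [Finset.mem_filter, Finset.mem_univ, true_and, Finset.mem_biUnion]
      constructor
      · intro hx
        have hfx : g x ≠ x := by
          intro h; rw [← per_eq_one_iff g (x := x)] at h; omega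
        refine ⟨g.cycleOf x, ⟨?_, ?_⟩, ?_⟩
        · exact Equiv.Perm.cycleOf_mem_cycleFactorsFinset_iff.2 (Equiv.Perm.mem_support.2 hfx)
        · rw [← orb_of_not_fixed g hfx]; exact hx
        · rw [Equiv.Perm.mem_support_cycleOf_iff' hfx]
      · rintro ⟨c, ⟨hcmem, hccard⟩, hxc⟩
        have hcx : c = g.cycleOf x := Equiv.Perm.cycle_is_cycleOf hxc hcmem
        have hfx : g x ≠ x := by
          have h1 := (Equiv.Perm.mem_cycleFactorsFinset_iff.1 hcmem).2 x hxc
          have h2 := Equiv.Perm.mem_support.1 hxc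
          rw [h1] at h2; exact h2
        rw [per, orb_of_not_fixed g hfx, ← hcx]
        exact hccard
    rw [hset, Finset.card_biUnion]
    · rw [Finset.sum_congr rfl (fun c hc => (Finset.mem_filter.1 hc).2), Finset.sum_const,
        smul_eq_mul, mul_comm, cyc, if_neg hd1]
      congr 1
      rw [Equiv.Perm.cycleType_def, Multiset.count_map]
      rw [Finset.card, Finset.filter_val]
      congr 1
      apply Multiset.filter_congr
      intro c _
      simp [eq_comm]
    · intro c hc c' hc' hne
      have hcm := (Finset.mem_filter.1 hc).1
      have hcm' := (Finset.mem_filter.1 hc').1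
      exact (Equiv.Perm.Disjoint.disjoint_support
        (g.cycleFactorsFinset_pairwise_disjoint hcm hcm' hne))


/-- the set of `e`-tuples of points of period `d` in pairwise distinct orbits -/
def Q (d : ℕ) {e : ℕ} (c : Fin e → Fin m) : Prop :=
  (∀ r, per g (c r) = d) ∧ ∀ ⦃r s : Fin e⦄, r ≠ s → ¬ g.SameCycle (c r) (c s)

open scoped Classical in
theorem card_avoid (d : ℕ) (hd : d ≠ 0) {e : ℕ} (c : Fin e → Fin m) (hc : Q g d c) :
    Nat.card {x : Fin m // per g x = d ∧ ∀ r, ¬ g.SameCycle x (c r)} =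
      d * cyc g d - e * d := by
  rw [Nat.card_eq_fintype_card, Fintype.card_subtype]
  have hset : (Finset.univ.filter fun x => per g x = d ∧ ∀ r, ¬ g.SameCycle x (c r)) =
      (Finset.univ.filter fun x => per g x = d) \
        Finset.univ.biUnion (fun r => orb g (c r)) := by
    ext x
    simp only [Finset.mem_filter, Finset.mem_univ, true_and, Finset.mem_sdiff,
      Finset.mem_biUnion, not_exists, mem_orb]
    constructor
    · rintro ⟨h1, h2⟩
      exact ⟨h1, fun r hr => h2 r hr.symm⟩
    · rintro ⟨h1, h2⟩
      exact ⟨h1, fun r hr => h2 r hr.symm⟩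
  rw [hset, Finset.card_sdiff_of_subset, filter_per_card g d hd, Finset.card_biUnion]
  · rw [Finset.sum_congr rfl fun r _ => show (orb g (c r)).card = d from hc.1 r,
      Finset.sum_const, Finset.card_univ, Fintype.card_fin, smul_eq_mul]
  · intro r _ s _ hrs
    simp only [Finset.disjoint_left]
    intro z hzr hzs
    rw [mem_orb] at hzr hzs
    exact hc.2 hrs (hzr.trans hzs.symm)
  · intro z hz
    rw [Finset.mem_biUnion] at hz
    obtain ⟨r, _, hzr⟩ := hz
    rw [mem_orb] at hzr
    rw [Finset.mem_filter]
    refine ⟨Finset.mem_univ z, ?_⟩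
    rw [per, ← orb_eq_of_sameCycle g hzr]
    exact hc.1 r

theorem card_Q (d : ℕ) (hd : d ≠ 0) :
    ∀ e : ℕ, Nat.card {c : Fin e → Fin m // Q g d c} =
      d ^ e * (cyc g d).descFactorial e
  | 0 => by
    haveI : Unique {c : Fin 0 → Fin m // Q g d c} :=
      ⟨⟨⟨Fin.elim0, ⟨fun r => r.elim0, fun r => r.elim0⟩⟩⟩,
        fun a => Subtype.ext (funext fun r => r.elim0)⟩
    simp [Nat.card_unique]
  | (e + 1) => by
    classical
    have E : {c : Fin (e + 1) → Fin m // Q g d c} ≃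
        Σ c : {c : Fin e → Fin m // Q g d c},
          {x : Fin m // per g x = d ∧ ∀ r, ¬ g.SameCycle x (c.1 r)} := by
      refine ⟨fun u => ⟨⟨fun r => u.1 r.succ, ⟨fun r => u.2.1 _,
          fun r s hrs => u.2.2 (fun h => hrs (Fin.succ_injective _ h))⟩⟩,
          ⟨u.1 0, u.2.1 0, fun r => u.2.2 (Fin.succ_ne_zero r).symm⟩⟩,
        fun p => ⟨Fin.cons p.2.1 p.1.1, ?_, ?_⟩, fun u => ?_, fun p => ?_⟩
      · intro r
        refine Fin.cases ?_ ?_ r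
        · simpa using p.2.2.1
        · intro i; simpa using p.1.2.1 i
      · intro r s hrs
        induction r using Fin.cases with
        | zero =>
          induction s using Fin.cases with
          | zero => exact absurd rfl hrs
          | succ j =>
            simp only [Fin.cons_zero, Fin.cons_succ]
            exact p.2.2.2 j
        | succ i =>
          induction s using Fin.cases with
          | zero =>
            simp only [Fin.cons_zero, Fin.cons_succ]
            exact fun hsc => p.2.2.2 i hsc.symm
          | succ j =>
            simp only [Fin.cons_succ]
            exact p.1.2.2 (fun h => hrs (by rw [h]))
      · apply Subtype.ext
        funext r
        refine Fin.cases ?_ ?_ r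
        · simp
        · intro i; simp
      · rcases p with ⟨⟨c, hc⟩, ⟨x, hx⟩⟩
        rfl
    rw [Nat.card_congr E, Nat.card_eq_fintype_card, Fintype.card_sigma]
    have : ∀ c : {c : Fin e → Fin m // Q g d c},
        Fintype.card {x : Fin m // per g x = d ∧ ∀ r, ¬ g.SameCycle x (c.1 r)} =
          d * cyc g d - e * d := by
      intro c
      rw [← Nat.card_eq_fintype_card]
      exact card_avoid g d hd c.1 c.2
    rw [Finset.sum_congr rfl fun c _ => this c, Finset.sum_const, Finset.card_univ,
      ← Nat.card_eq_fintype_card, card_Q d hd e, smul_eq_mul]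
    rw [Nat.descFactorial_succ, pow_succ]
    have : d * cyc g d - e * d = d * (cyc g d - e) := by
      rw [Nat.mul_sub]; ring_nf
    rw [this]; ring

section Psi

variable {ℓ : ℕ} [NeZero ℓ] {d e : ℕ} (k : ZMod ℓ) (hk : addOrderOf k = d) (hde : d * e = ℓ)

/-- The transversal parametrization of `ZMod ℓ` by `Fin e × ZMod d`. -/
def ψfun (k : ZMod ℓ) (p : Fin e × ZMod d) : ZMod ℓ :=
  ((p.1 : ℕ) : ZMod ℓ) + p.2.val • k

include hk in
theorem hdpos : 0 < d := hk ▸ addOrderOf_pos k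

include hk hde in
theorem e_dvd_val : e ∣ k.val := by
  have hl0 : ℓ ≠ 0 := NeZero.ne ℓ
  have h1 : ((k.val : ℕ) : ZMod ℓ) = k := ZMod.natCast_rightInverse k
  have h2 : addOrderOf ((k.val : ℕ) : ZMod ℓ) = ℓ / ℓ.gcd k.val :=
    ZMod.addOrderOf_coe k.val hl0
  rw [h1, hk] at h2
  have hgd : ℓ.gcd k.val ∣ ℓ := Nat.gcd_dvd_left _ _
  have hgv : ℓ.gcd k.val ∣ k.val := Nat.gcd_dvd_right _ _
  have hge : ℓ.gcd k.val = e := by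
    have h3 : d * ℓ.gcd k.val = ℓ := by
      rw [h2, Nat.div_mul_cancel hgd]
    have hd0 : d ≠ 0 := (hdpos k hk).ne'
    exact Nat.eq_of_mul_eq_mul_left (Nat.pos_of_ne_zero hd0) (h3.trans hde.symm)
  exact hge ▸ hgv

include hk hde in
theorem ψfun_injective : Function.Injective (ψfun (d := d) (e := e) k) := by
  haveI : NeZero d := ⟨(hdpos k hk).ne'⟩
  rintro ⟨r, j⟩ ⟨r', j'⟩ h
  unfold ψfun at h
  simp only at h
  -- first, r = r'
  have hcast : ((r.val + j.val * k.val : ℕ) : ZMod ℓ) = ((r'.val + j'.val * k.val : ℕ) : ZMod ℓ) := by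
    push_cast
    have hnk : ((k.val : ℕ) : ZMod ℓ) = k := ZMod.natCast_rightInverse k
    rw [hnk]
    simpa [nsmul_eq_mul] using h
  have hmod : (r.val + j.val * k.val) ≡ (r'.val + j'.val * k.val) [MOD ℓ] :=
    (ZMod.natCast_eq_natCast_iff _ _ _).1 hcast
  have hedvd : e ∣ ℓ := ⟨d, by rw [← hde]; ring⟩
  have hmode : (r.val + j.val * k.val) ≡ (r'.val + j'.val * k.val) [MOD e] :=
    hmod.of_dvd hedvd
  obtain ⟨t, ht⟩ := e_dvd_val k hk hde
  have hrr : r = r' := by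
    have h1 : (r.val + j.val * k.val) % e = r.val % e := by
      rw [ht, show j.val * (e * t) = (j.val * t) * e by ring, Nat.add_mul_mod_self_right]
    have h2 : (r'.val + j'.val * k.val) % e = r'.val % e := by
      rw [ht, show j'.val * (e * t) = (j'.val * t) * e by ring, Nat.add_mul_mod_self_right]
    have := hmode
    unfold Nat.ModEq at this
    rw [h1, h2, Nat.mod_eq_of_lt r.isLt, Nat.mod_eq_of_lt r'.isLt] at this
    exact Fin.ext this
  subst hrr
  -- then j = j'
  have hj : j.val • k = j'.val • k := by
    have := h
    exact add_left_cancel this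
  have := nsmul_eq_nsmul_iff_modEq.1 hj
  rw [hk] at this
  have : j.val % d = j'.val % d := this
  rw [Nat.mod_eq_of_lt j.val_lt, Nat.mod_eq_of_lt j'.val_lt] at this
  exact Prod.ext rfl (ZMod.val_injective _ this)

/-- The transversal parametrization as an equivalence. -/
noncomputable def ψ : (Fin e × ZMod d) ≃ ZMod ℓ :=
  Equiv.ofBijective (ψfun k) (by
    haveI : NeZero d := ⟨(hdpos k hk).ne'⟩
    rw [Fintype.bijective_iff_injective_and_card]
    refine ⟨ψfun_injective k hk hde, ?_⟩
    simp [ZMod.card, hde, mul_comm])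

theorem ψ_apply (p : Fin e × ZMod d) : ψ k hk hde p = ψfun k p := rfl

theorem ψ_add_k (r : Fin e) (j : ZMod d) :
    ψ k hk hde (r, j + 1) = ψ k hk hde (r, j) + k := by
  haveI : NeZero d := ⟨(hdpos k hk).ne'⟩
  rw [ψ_apply, ψ_apply]
  unfold ψfun
  simp only
  rw [add_assoc]
  congr 1
  have hmodsmul : ∀ n : ℕ, (n % d) • k = n • k := by
    intro n; rw [← hk, mod_addOrderOf_nsmul]
  rw [ZMod.val_add, hmodsmul, add_nsmul]
  congr 1
  rcases eq_or_lt_of_le (Nat.one_le_iff_ne_zero.2 (NeZero.ne d)) with hd1 | hd1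
  · have hk0 : k = 0 := by
      rw [← AddMonoid.addOrderOf_eq_one_iff, hk, ← hd1]
    simp [hk0]
  · rw [ZMod.val_one_eq_one_mod, Nat.mod_eq_of_lt hd1, one_nsmul]

include hk hde in
theorem apply_psi_natCast (f : ZMod ℓ ↪ Fin m) (hf : ∀ i, g (f i) = f (i + k)) (r : Fin e) :
    ∀ n : ℕ, f (ψ k hk hde (r, (n : ZMod d))) = (g ^ n) (f (ψ k hk hde (r, 0)))
  | 0 => by simp
  | (n + 1) => by
    have h1 : ((n + 1 : ℕ) : ZMod d) = (n : ZMod d) + 1 := by push_cast; ring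
    rw [h1, ψ_add_k, ← hf, apply_psi_natCast f hf r n, pow_succ', Equiv.Perm.mul_apply]

include hk hde in
theorem card_F :
    Nat.card {f : ZMod ℓ ↪ Fin m // ∀ i : ZMod ℓ, g (f i) = f (i + k)} =
      d ^ e * (cyc g d).descFactorial e := by
  haveI : NeZero d := ⟨(hdpos k hk).ne'⟩
  rw [← card_Q g d (NeZero.ne d) e]
  apply Nat.card_congr
  have hψinj := (ψ k hk hde).injective
  have hψs : ∀ i : ZMod ℓ, (ψ k hk hde).symm (i + k) =
      (((ψ k hk hde).symm i).1, ((ψ k hk hde).symm i).2 + 1) := by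
    intro i
    rw [Equiv.symm_apply_eq, ψ_add_k]
    rw [show (((ψ k hk hde).symm i).1, ((ψ k hk hde).symm i).2) = (ψ k hk hde).symm i from rfl,
      Equiv.apply_symm_apply]
  have hmod1 : ∀ j : ZMod d, (j + 1).val ≡ j.val + 1 [MOD d] := by
    intro j
    rw [ZMod.val_add]
    refine (Nat.mod_modEq _ _).trans (Nat.ModEq.add_left _ ?_)
    show (1 : ZMod d).val ≡ 1 [MOD d]
    rw [show (1 : ZMod d) = ((1 : ℕ) : ZMod d) by push_cast; rfl, ZMod.val_natCast]
    exact Nat.mod_modEq 1 d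
  refine ⟨fun f => ⟨fun r => f.1 (ψ k hk hde (r, 0)), ?_, ?_⟩,
    fun c => ⟨⟨fun i => (g ^ (((ψ k hk hde).symm i).2.val)) (c.1 (((ψ k hk hde).symm i).1)), ?_⟩,
      ?_⟩, ?_, ?_⟩
  · -- per = d
    intro r
    refine per_eq_of g (hdpos k hk) ?_ ?_
    · rw [← apply_psi_natCast g k hk hde f.1 f.2 r d, ZMod.natCast_self]
    · intro a ha b hb hab
      rw [← apply_psi_natCast g k hk hde f.1 f.2 r a,
        ← apply_psi_natCast g k hk hde f.1 f.2 r b] at hab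
      have := hψinj (f.1.injective hab)
      have hcast : ((a : ℕ) : ZMod d) = ((b : ℕ) : ZMod d) := congrArg Prod.snd this
      have := congrArg ZMod.val hcast
      rwa [ZMod.val_natCast, ZMod.val_natCast, Nat.mod_eq_of_lt ha, Nat.mod_eq_of_lt hb] at this
  · -- pairwise not same cycle
    intro r s hrs hsc
    obtain ⟨n, hn⟩ := (sameCycle_iff_exists_pow g).1 hsc
    have : f.1 (ψ k hk hde (r, (n : ZMod d))) = f.1 (ψ k hk hde (s, 0)) := by
      rw [apply_psi_natCast g k hk hde f.1 f.2 r n, hn]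
    have := hψinj (f.1.injective this)
    exact hrs (congrArg Prod.fst this)
  · -- injectivity of reconstructed map
    intro i i' hii
    simp only at hii
    set r := (((ψ k hk hde).symm i)).1 with hr
    set j := (((ψ k hk hde).symm i)).2 with hj
    set r' := (((ψ k hk hde).symm i')).1 with hr'
    set j' := (((ψ k hk hde).symm i')).2 with hj'
    have hrr : r = r' := by
      by_contra hne
      apply c.2.2 hne
      refine Equiv.Perm.SameCycle.trans ⟨(j.val : ℤ), by rw [zpow_natCast, hii]⟩ ?_
      exact ⟨-(j'.val : ℤ), by rw [zpow_neg, zpow_natCast, Equiv.Perm.inv_eq_iff_eq]⟩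
    rw [← hrr] at hii
    have hjj : j = j' := by
      have hmod := (pow_apply_eq_pow_apply_iff g (c.1 r)).1 hii
      rw [c.2.1 r] at hmod
      have := hmod
      unfold Nat.ModEq at this
      rw [Nat.mod_eq_of_lt j.val_lt, Nat.mod_eq_of_lt j'.val_lt] at this
      exact ZMod.val_injective _ this
    have : (ψ k hk hde).symm i = (ψ k hk hde).symm i' := Prod.ext (hrr) (hjj)
    exact (ψ k hk hde).symm.injective this
  · -- equivariance of reconstructed map
    intro i
    show g ((g ^ (((ψ k hk hde).symm i).2.val)) (c.1 (((ψ k hk hde).symm i).1))) =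
      (g ^ (((ψ k hk hde).symm (i + k)).2.val)) (c.1 (((ψ k hk hde).symm (i + k)).1))
    rw [hψs i]
    simp only
    rw [← Equiv.Perm.mul_apply, ← pow_succ']
    exact ((pow_apply_eq_pow_apply_iff g _).2 (by rw [c.2.1]; exact (hmod1 _).symm))
  · -- left inverse
    intro f
    apply Subtype.ext
    apply Function.Embedding.ext
    intro i
    simp only [Function.Embedding.coeFn_mk]
    show (g ^ (((ψ k hk hde).symm i).2.val)) (f.1 (ψ k hk hde (((ψ k hk hde).symm i).1, 0))) = f.1 i
    rw [← apply_psi_natCast g k hk hde f.1 f.2 _ _,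
      ZMod.natCast_rightInverse ((ψ k hk hde).symm i).2]
    rw [show ((((ψ k hk hde).symm i).1, ((ψ k hk hde).symm i).2)) = (ψ k hk hde).symm i from rfl,
      Equiv.apply_symm_apply]
  · -- right inverse
    intro c
    apply Subtype.ext
    funext r
    simp only [Function.Embedding.coeFn_mk]
    show (g ^ (((ψ k hk hde).symm (ψ k hk hde (r, 0))).2.val))
      (c.1 (((ψ k hk hde).symm (ψ k hk hde (r, 0))).1)) = c.1 r
    rw [Equiv.symm_apply_apply]
    simp

end Psi


section Pointed

variable (ℓ : ℕ) [NeZero ℓ]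

/-- The basic `ℓ`-cycle on `ZMod ℓ`. -/
def σℓ : Equiv.Perm (ZMod ℓ) := Equiv.addRight (1 : ZMod ℓ)

theorem σℓ_apply (y : ZMod ℓ) : σℓ ℓ y = y + 1 := rfl

theorem σℓ_pow : ∀ (n : ℕ) (y : ZMod ℓ), ((σℓ ℓ) ^ n) y = y + (n : ZMod ℓ)
  | 0, y => by simp
  | (n + 1), y => by
    rw [pow_succ', Equiv.Perm.mul_apply, σℓ_pow n y, σℓ_apply]
    push_cast
    ring

variable (hℓ : 1 < ℓ)

include hℓ in
theorem one_ne_zero' : (1 : ZMod ℓ) ≠ 0 := by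
  haveI : Fact (1 < ℓ) := ⟨hℓ⟩
  exact one_ne_zero

include hℓ in
theorem σℓ_isCycle : (σℓ ℓ).IsCycle := by
  refine ⟨0, ?_, fun y hy => ⟨(y.val : ℤ), ?_⟩⟩
  · rw [σℓ_apply, zero_add]
    exact one_ne_zero' ℓ hℓ
  · rw [zpow_natCast, σℓ_pow, zero_add]
    exact ZMod.natCast_rightInverse y

include hℓ in
theorem σℓ_support : (σℓ ℓ).support = Finset.univ := by
  ext y
  simp only [Equiv.Perm.mem_support, Finset.mem_univ, iff_true, σℓ_apply]
  intro h
  exact one_ne_zero' ℓ hℓ (add_eq_left.1 h)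

open scoped Classical in
/-- Extension of a permutation of `ZMod ℓ` along an embedding into `Fin m`. -/
noncomputable def ext (f : ZMod ℓ ↪ Fin m) : Equiv.Perm (Fin m) :=
  (σℓ ℓ).extendDomain (Equiv.ofInjective f.1 f.2)

open scoped Classical in
theorem ext_apply_mem (f : ZMod ℓ ↪ Fin m) (i : ZMod ℓ) : ext ℓ f (f i) = f (i + 1) :=
  Equiv.Perm.extendDomain_apply_image (σℓ ℓ) (Equiv.ofInjective f.1 f.2) i

open scoped Classical in
theorem ext_apply_not_mem (f : ZMod ℓ ↪ Fin m) {y : Fin m} (hy : y ∉ Set.range f) :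
    ext ℓ f y = y :=
  Equiv.Perm.extendDomain_apply_not_subtype (σℓ ℓ) (Equiv.ofInjective f.1 f.2) hy

include hℓ in
theorem ext_isCycle (f : ZMod ℓ ↪ Fin m) : (ext ℓ f).IsCycle := by
  classical
  exact (σℓ_isCycle ℓ hℓ).extendDomain _

include hℓ in
theorem ext_support_card (f : ZMod ℓ ↪ Fin m) : (ext ℓ f).support.card = ℓ := by
  classical
  rw [ext, Equiv.Perm.support_extend_domain, Finset.card_map, σℓ_support ℓ hℓ,
    Finset.card_univ, ZMod.card]

theorem ext_pow (f : ZMod ℓ ↪ Fin m) : ∀ (n : ℕ) (i : ZMod ℓ),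
    ((ext ℓ f) ^ n) (f i) = f (i + (n : ZMod ℓ))
  | 0, i => by simp
  | (n + 1), i => by
    rw [pow_succ', Equiv.Perm.mul_apply, ext_pow f n i, ext_apply_mem]
    push_cast
    congr 1
    ring

theorem g_not_mem_range (k : ZMod ℓ) (f : ZMod ℓ ↪ Fin m)
    (hf : ∀ i : ZMod ℓ, g (f i) = f (i + k)) {y : Fin m} (hy : y ∉ Set.range f) :
    g y ∉ Set.range f := by
  rintro ⟨i, hi⟩
  apply hy
  refine ⟨i - k, ?_⟩
  have := hf (i - k)
  rw [sub_add_cancel, hi] at this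
  exact g.injective this

theorem ext_commute (k : ZMod ℓ) (f : ZMod ℓ ↪ Fin m)
    (hf : ∀ i : ZMod ℓ, g (f i) = f (i + k)) : Commute (ext ℓ f) g := by
  apply Equiv.ext
  intro y
  rw [Equiv.Perm.mul_apply, Equiv.Perm.mul_apply]
  rcases em (y ∈ Set.range f) with ⟨i, rfl⟩ | hy
  · rw [hf i, ext_apply_mem, ext_apply_mem, hf (i + 1)]
    congr 1
    ring
  · rw [ext_apply_not_mem ℓ f hy, ext_apply_not_mem ℓ f (g_not_mem_range g ℓ k f hf hy)]

include hℓ in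
theorem zero_mem_ext_support (f : ZMod ℓ ↪ Fin m) : f 0 ∈ (ext ℓ f).support := by
  rw [Equiv.Perm.mem_support, ext_apply_mem]
  intro h
  have := f.injective h
  rw [zero_add] at this
  exact one_ne_zero' ℓ hℓ this

theorem pointed_ext
    (a b : Σ γ : {γ : Equiv.Perm (Fin m) // γ.IsCycle ∧ γ.support.card = ℓ ∧ Commute γ g},
      {x : Fin m // x ∈ γ.1.support}) (h1 : a.1.1 = b.1.1) (h2 : (a.2 : Fin m) = b.2) :
    a = b := by
  rcases a with ⟨⟨γ1, p1⟩, ⟨x1, q1⟩⟩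
  rcases b with ⟨⟨γ2, p2⟩, ⟨x2, q2⟩⟩
  simp only at h1 h2
  subst h1
  subst h2
  rfl

include hℓ in
theorem card_pointed_sigma :
    Nat.card (Σ γ : {γ : Equiv.Perm (Fin m) // γ.IsCycle ∧ γ.support.card = ℓ ∧ Commute γ g},
        {x : Fin m // x ∈ γ.1.support}) =
    Nat.card (Σ k : ZMod ℓ, {f : ZMod ℓ ↪ Fin m // ∀ i : ZMod ℓ, g (f i) = f (i + k)}) := by
  refine (Nat.card_congr (Equiv.ofBijective
    (fun p => ⟨⟨ext ℓ p.2.1, ext_isCycle ℓ hℓ p.2.1, ext_support_card ℓ hℓ p.2.1,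
        ext_commute g ℓ p.1 p.2.1 p.2.2⟩,
      ⟨p.2.1 0, zero_mem_ext_support ℓ hℓ p.2.1⟩⟩)
    ⟨?_, ?_⟩)).symm
  · -- injective
    rintro ⟨k, f, hf⟩ ⟨k', f', hf'⟩ h
    have hγ : ext ℓ f = ext ℓ f' := congrArg (fun z => z.1.1) h
    have hx : f 0 = f' 0 := congrArg (fun z => (z.2 : Fin m)) h
    have hfeq : ∀ i : ZMod ℓ, f i = f' i := by
      intro i
      have h1 : ((ext ℓ f) ^ i.val) (f 0) = f i := by
        rw [ext_pow, zero_add, ZMod.natCast_rightInverse i]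
      have h2 : ((ext ℓ f') ^ i.val) (f' 0) = f' i := by
        rw [ext_pow, zero_add, ZMod.natCast_rightInverse i]
      rw [← h1, ← h2, hγ, hx]
    have hk : k = k' := by
      have e1 : g (f 0) = f k := by rw [hf 0, zero_add]
      have e2 : g (f' 0) = f' k' := by rw [hf' 0, zero_add]
      have : f k = f k' := by rw [← e1, hx, e2, ← hfeq k']
      exact f.injective this
    subst hk
    have : f = f' := Function.Embedding.ext hfeq
    subst this
    rfl
  · -- surjective
    rintro ⟨⟨γ, hγc, hγcard, hγcomm⟩, ⟨x, hx⟩⟩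
    have hcyc : γ.IsCycleOn ↑γ.support := by
      rw [Equiv.Perm.coe_support_eq_set_support]
      exact hγc.isCycleOn
    have hiff : ∀ a b : ℕ, ((γ ^ a) x = (γ ^ b) x ↔ a ≡ b [MOD ℓ]) := by
      intro a b
      rw [hcyc.pow_apply_eq_pow_apply hx, hγcard]
    have finj : Function.Injective (fun i : ZMod ℓ => (γ ^ i.val) x) := by
      intro i i' hii
      have := (hiff _ _).1 hii
      unfold Nat.ModEq at this
      rw [Nat.mod_eq_of_lt (ZMod.val_lt i), Nat.mod_eq_of_lt (ZMod.val_lt i')] at this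
      exact ZMod.val_injective _ this
    set f : ZMod ℓ ↪ Fin m := ⟨fun i => (γ ^ i.val) x, finj⟩ with hfdef
    have hγx : γ x ≠ x := Equiv.Perm.mem_support.1 hx
    have hgx : γ (g x) ≠ g x := by
      have hcg : γ (g x) = g (γ x) := by
        have := DFunLike.congr_fun hγcomm x
        rw [Equiv.Perm.mul_apply, Equiv.Perm.mul_apply] at this
        exact this
      rw [hcg]
      exact fun hc => hγx (g.injective hc)
    obtain ⟨n, -, -, hn⟩ := (hγc.sameCycle hγx hgx).exists_pow_eq γ
    have hvc : ∀ (i : ZMod ℓ) (a : ℕ), i.val ≡ a [MOD ℓ] → f i = (γ ^ a) x := by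
      intro i a ha
      exact (hiff _ _).2 ha
    set k : ZMod ℓ := (n : ZMod ℓ) with hkdef
    have hvadd : ∀ (i : ZMod ℓ), (i + k).val ≡ i.val + n [MOD ℓ] := by
      intro i
      rw [ZMod.val_add, hkdef, ZMod.val_natCast]
      exact (Nat.mod_modEq _ _).trans (Nat.ModEq.add_left _ (Nat.mod_modEq n ℓ))
    have hf : ∀ i : ZMod ℓ, g (f i) = f (i + k) := by
      intro i
      have h1 : f (i + k) = (γ ^ (i.val + n)) x := hvc _ _ (hvadd i)
      rw [h1, pow_add, Equiv.Perm.mul_apply, hn]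
      show g (f i) = (γ ^ i.val) (g x)
      have hcp := (hγcomm.pow_left i.val).symm
      have := DFunLike.congr_fun hcp x
      rw [Equiv.Perm.mul_apply, Equiv.Perm.mul_apply] at this
      rw [← this]
      rfl
    have hf0 : f 0 = x := by
      show (γ ^ (0 : ZMod ℓ).val) x = x
      rw [ZMod.val_zero, pow_zero]
      rfl
    have hrange : ∀ y : Fin m, y ∈ γ.support → y ∈ Set.range f := by
      intro y hy
      obtain ⟨n', -, -, hn'⟩ :=
        (hγc.sameCycle hγx (Equiv.Perm.mem_support.1 hy)).exists_pow_eq γ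
      refine ⟨(n' : ZMod ℓ), ?_⟩
      rw [show f ((n' : ZMod ℓ)) = (γ ^ n') x from
        hvc _ _ (by rw [ZMod.val_natCast]; exact Nat.mod_modEq n' ℓ), hn']
    have hγeq : ext ℓ f = γ := by
      apply Equiv.ext
      intro y
      rcases em (y ∈ Set.range f) with ⟨i, rfl⟩ | hy
      · rw [ext_apply_mem]
        have h1 : f (i + 1) = (γ ^ (i.val + 1)) x := by
          apply hvc
          rw [ZMod.val_add]
          refine (Nat.mod_modEq _ _).trans (Nat.ModEq.add_left _ ?_)
          rw [ZMod.val_one_eq_one_mod]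
          exact Nat.mod_modEq 1 ℓ
        rw [h1, pow_succ', Equiv.Perm.mul_apply]
        rfl
      · rw [ext_apply_not_mem ℓ f hy]
        have : y ∉ γ.support := fun hc => hy (hrange y hc)
        exact (Equiv.Perm.notMem_support.1 this).symm
    refine ⟨⟨k, ⟨f, hf⟩⟩, ?_⟩
    apply pointed_ext g ℓ
    · exact hγeq
    · exact hf0

theorem card_pointed :
    Nat.card (Σ γ : {γ : Equiv.Perm (Fin m) // γ.IsCycle ∧ γ.support.card = ℓ ∧ Commute γ g},
        {x : Fin m // x ∈ γ.1.support}) =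
      ℓ * Nat.card {γ : Equiv.Perm (Fin m) // γ.IsCycle ∧ γ.support.card = ℓ ∧ Commute γ g} := by
  classical
  rw [Nat.card_eq_fintype_card, Fintype.card_sigma,
    Finset.sum_congr rfl (fun γ _ => by rw [Fintype.card_coe, γ.2.2.1]),
    Finset.sum_const, Finset.card_univ, smul_eq_mul, ← Nat.card_eq_fintype_card, mul_comm]

include hℓ in
theorem sum_addOrderOf (h : ℕ → ℕ) :
    ∑ k : ZMod ℓ, h (addOrderOf k) = ∑ d ∈ ℓ.divisors, d.totient * h d := by
  classical
  rw [← Finset.sum_fiberwise_of_maps_to (t := ℓ.divisors)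
    (g := fun k : ZMod ℓ => addOrderOf k) ?_ (fun k => h (addOrderOf k))]
  · apply Finset.sum_congr rfl
    intro d hd
    have hdvd : d ∣ Fintype.card (ZMod ℓ) := by
      rw [ZMod.card]; exact (Nat.mem_divisors.1 hd).1
    rw [Finset.sum_congr rfl (fun k hk => by rw [(Finset.mem_filter.1 hk).2]),
      Finset.sum_const, IsAddCyclic.card_addOrderOf_eq_totient hdvd, smul_eq_mul]
  · intro k _
    rw [Nat.mem_divisors]
    refine ⟨?_, by omega⟩
    have := addOrderOf_dvd_card (x := k)
    rwa [ZMod.card] at this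

include hℓ in
theorem card_sigma_F :
    Nat.card (Σ k : ZMod ℓ, {f : ZMod ℓ ↪ Fin m // ∀ i : ZMod ℓ, g (f i) = f (i + k)}) =
      ∑ d ∈ ℓ.divisors, d.totient * (d ^ (ℓ / d) * (cyc g d).descFactorial (ℓ / d)) := by
  classical
  rw [Nat.card_eq_fintype_card, Fintype.card_sigma]
  have hstep : ∀ k : ZMod ℓ,
      Fintype.card {f : ZMod ℓ ↪ Fin m // ∀ i : ZMod ℓ, g (f i) = f (i + k)} =
        (addOrderOf k) ^ (ℓ / addOrderOf k) *
          (cyc g (addOrderOf k)).descFactorial (ℓ / addOrderOf k) := by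
    intro k
    rw [← Nat.card_eq_fintype_card]
    have hdvd : addOrderOf k ∣ ℓ := by
      have := addOrderOf_dvd_card (x := k)
      rwa [ZMod.card] at this
    exact card_F g k rfl (Nat.mul_div_cancel' hdvd)
  rw [Finset.sum_congr rfl fun k _ => hstep k]
  exact sum_addOrderOf ℓ hℓ (fun d => d ^ (ℓ / d) * (cyc g d).descFactorial (ℓ / d))

end Pointed

theorem main (ℓ : ℕ) (hℓ : 1 < ℓ) :
    ℓ * Nat.card {γ : Equiv.Perm (Fin m) // γ.IsCycle ∧ γ.support.card = ℓ ∧ Commute γ g} =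
      ∑ d ∈ ℓ.divisors, Nat.totient d * d ^ (ℓ / d) * Nat.descFactorial (cyc g d) (ℓ / d) := by
  haveI : NeZero ℓ := ⟨by omega⟩
  rw [← card_pointed g ℓ, card_pointed_sigma g ℓ hℓ, card_sigma_F g ℓ hℓ]
  apply Finset.sum_congr rfl
  intro d _
  ring


end CCC

/-- For `ℓ > 1`, the number of `ℓ`-cycles in `S_m` (permutations with a single
nontrivial cycle, of length `ℓ`) commuting with `g` is
`∑_{d·e = ℓ} φ(d) (dᵉ/ℓ) X_d(g)(X_d(g)−1)⋯(X_d(g)−e+1)`. -/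
theorem card_commuting_cycles (ℓ m : ℕ) (hℓ : 1 < ℓ) (g : Equiv.Perm (Fin m)) :
    ℓ * Nat.card {γ : Equiv.Perm (Fin m) // γ.IsCycle ∧ γ.support.card = ℓ ∧ Commute γ g} =
      ∑ d ∈ ℓ.divisors, Nat.totient d * d ^ (ℓ / d) * Nat.descFactorial (cyc g d) (ℓ / d) :=
  CCC.main g ℓ hℓ
end

section
/- The character of the permutation representation of S_m on the set Γ_ℓ^m of ℓ-cycles of [1,m] is given by a polynomial in X₁,...,X_ℓ that is independent of m: χ(g) = φ(ℓ)X_ℓ(g) + ∑_{ed=ℓ, e≠1} φ(d)(dᵉ/ℓ)·X_d(g)(X_d(g)−1)⋯(X_d(g)−e+1). -/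
open Function Equiv

namespace CharProofAux

variable {m : ℕ} (g : Equiv.Perm (Fin m))

/-- minimal period of `x` under `g`. -/
noncomputable def per (x : Fin m) : ℕ := Function.minimalPeriod ⇑g x

lemma mem_periodicPts (x : Fin m) : x ∈ Function.periodicPts ⇑g :=
  ⟨orderOf g, orderOf_pos g, by
    show (g ^ orderOf g) x = x
    rw [pow_orderOf_eq_one]; rfl⟩

lemma per_pos (x : Fin m) : 0 < per g x :=
  Function.minimalPeriod_pos_of_mem_periodicPts (mem_periodicPts g x)

lemma pow_per (x : Fin m) : (g ^ per g x) x = x :=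
  Function.iterate_minimalPeriod

lemma per_pow_apply (n : ℕ) (x : Fin m) : per g ((g ^ n) x) = per g x :=
  Function.minimalPeriod_apply_iterate (mem_periodicPts g x) n

lemma pow_mod_per (n : ℕ) (x : Fin m) : (g ^ (n % per g x)) x = (g ^ n) x :=
  Function.iterate_mod_minimalPeriod_eq

lemma per_dvd_of_pow_eq {c : ℕ} {x : Fin m} (h : (g ^ c) x = x) : per g x ∣ c :=
  Function.IsPeriodicPt.minimalPeriod_dvd h

lemma pow_eq_pow_iff_modEq (a b : ℕ) (x : Fin m) :
    (g ^ a) x = (g ^ b) x ↔ a ≡ b [MOD per g x] := by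
  constructor
  · intro h
    rcases le_total a b with hab | hab
    · obtain ⟨c, rfl⟩ := Nat.exists_eq_add_of_le hab
      have hc : (g ^ c) x = x := by
        have h2 := h.symm
        rwa [pow_add, Equiv.Perm.mul_apply, EmbeddingLike.apply_eq_iff_eq] at h2
      exact ((Nat.modEq_iff_dvd' hab).2 (by simpa using per_dvd_of_pow_eq g hc))
    · obtain ⟨c, rfl⟩ := Nat.exists_eq_add_of_le hab
      have hc : (g ^ c) x = x := by
        rwa [pow_add, Equiv.Perm.mul_apply, EmbeddingLike.apply_eq_iff_eq] at h
      exact ((Nat.modEq_iff_dvd' hab).2 (by simpa using per_dvd_of_pow_eq g hc)).symm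
  · intro h
    rw [← pow_mod_per g a x, ← pow_mod_per g b x, h]

/-- the forward orbit of `x` under `g` (which is the full orbit). -/
def Orb (x : Fin m) : Set (Fin m) := {y | ∃ n : ℕ, (g ^ n) x = y}

lemma mem_orb_self (x : Fin m) : x ∈ Orb g x := ⟨0, rfl⟩

lemma orb_eq_of_mem {x y : Fin m} (h : y ∈ Orb g x) : Orb g y = Orb g x := by
  obtain ⟨n, rfl⟩ := h
  ext z
  constructor
  · rintro ⟨a, rfl⟩
    exact ⟨a + n, by rw [pow_add, Equiv.Perm.mul_apply]⟩
  · rintro ⟨a, rfl⟩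
    refine ⟨a + n * (orderOf g - 1), ?_⟩
    rw [← Equiv.Perm.mul_apply, ← pow_add]
    have h1 : orderOf g - 1 + 1 = orderOf g := Nat.succ_pred_eq_of_pos (orderOf_pos g)
    have : a + n * (orderOf g - 1) + n = a + n * orderOf g := by
      rw [Nat.add_assoc, ← Nat.mul_succ, Nat.succ_eq_add_one, Nat.sub_add_cancel (orderOf_pos g)]
    rw [this, pow_add, pow_mul', pow_orderOf_eq_one, one_pow, mul_one]

lemma per_eq_of_mem_orb {x y : Fin m} (h : y ∈ Orb g x) : per g y = per g x := by
  obtain ⟨n, rfl⟩ := h; exact per_pow_apply g n x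

lemma card_orb {x : Fin m} {d : ℕ} (h : per g x = d) : Nat.card (Orb g x) = d := by
  subst h
  have e : Fin (per g x) ≃ Orb g x := by
    refine Equiv.ofBijective (fun j => ⟨(g ^ (j : ℕ)) x, ⟨j, rfl⟩⟩) ⟨?_, ?_⟩
    · intro a b hab
      have h2 : ((a : ℕ)) ≡ (b : ℕ) [MOD per g x] :=
        (pow_eq_pow_iff_modEq g _ _ x).1 (congrArg Subtype.val hab)
      have := h2
      rw [Nat.ModEq] at this
      rw [Nat.mod_eq_of_lt a.isLt, Nat.mod_eq_of_lt b.isLt] at this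
      exact Fin.ext this
    · rintro ⟨y, n, rfl⟩
      exact ⟨⟨n % per g x, Nat.mod_lt _ (per_pos g x)⟩, Subtype.ext (pow_mod_per g n x)⟩
  rw [← Nat.card_congr e, Nat.card_eq_fintype_card, Fintype.card_fin]


lemma per_eq_card_support_cycleOf {x : Fin m} (hx : g x ≠ x) :
    (g.cycleOf x).support.card = per g x := by
  classical
  have hc : (g.cycleOf x).IsCycle := Equiv.Perm.isCycle_cycleOf g hx
  have hord : orderOf (g.cycleOf x) = (g.cycleOf x).support.card := hc.orderOf
  have h1 : per g x ∣ (g.cycleOf x).support.card := by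
    apply per_dvd_of_pow_eq g
    rw [← Equiv.Perm.cycleOf_pow_apply_self, ← hord, pow_orderOf_eq_one]
    rfl
  have hcx : g.cycleOf x x ≠ x := by
    rw [Equiv.Perm.cycleOf_apply_self]; exact hx
  have h2 : (g.cycleOf x) ^ (per g x) = 1 :=
    (hc.pow_eq_one_iff' hcx).2 ((Equiv.Perm.cycleOf_pow_apply_self g x _).trans (pow_per g x))
  have h3 : (g.cycleOf x).support.card ∣ per g x := by
    rw [← hord]; exact orderOf_dvd_of_pow_eq_one h2
  exact Nat.dvd_antisymm h3 h1

lemma cyc_eq_card_filter (d : ℕ) (hd : d ≠ 1) :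
    cyc g d = (g.cycleFactorsFinset.filter (fun c => c.support.card = d)).card := by
  classical
  rw [cyc, if_neg hd, Equiv.Perm.cycleType_def, Multiset.count_map]
  have h : (Multiset.filter (fun a => d = (Finset.card ∘ Equiv.Perm.support) a)
      g.cycleFactorsFinset.val)
      = (g.cycleFactorsFinset.filter (fun c => c.support.card = d)).val := by
    rw [Finset.filter_val]
    exact Multiset.filter_congr (fun a _ => by simp [eq_comm])
  rw [h, Finset.card]

lemma card_per_filter (d : ℕ) (hd : d ≠ 1) :
    (Finset.univ.filter fun x => per g x = d).card = d * cyc g d := by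
  classical
  rw [cyc_eq_card_filter g d hd]
  have key : (Finset.univ.filter fun x => per g x = d)
      = (g.cycleFactorsFinset.filter fun c => c.support.card = d).biUnion
        (fun c => c.support) := by
    ext x
    simp only [Finset.mem_filter, Finset.mem_univ, true_and, Finset.mem_biUnion]
    constructor
    · intro hx
      have hfix : g x ≠ x := by
        intro hfx
        exact hd (hx ▸ Function.minimalPeriod_eq_one_iff_isFixedPt.2 hfx)
      refine ⟨g.cycleOf x, ⟨?_, ?_⟩, ?_⟩
      · exact Equiv.Perm.cycleOf_mem_cycleFactorsFinset_iff.2 (Equiv.Perm.mem_support.2 hfix)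
      · rw [per_eq_card_support_cycleOf g hfix]; exact hx
      · rw [Equiv.Perm.mem_support_cycleOf_iff]
        exact ⟨Equiv.Perm.SameCycle.refl _ _, Equiv.Perm.mem_support.2 hfix⟩
    · rintro ⟨c, hc, hxc⟩
      obtain ⟨hc, hcard⟩ := hc
      have hfix : g x ≠ x := by
        have h1 := (Equiv.Perm.mem_cycleFactorsFinset_iff.1 hc).2 x hxc
        have h2 : c x ≠ x := Equiv.Perm.mem_support.1 hxc
        rw [h1] at h2; exact h2
      have hcx : c = g.cycleOf x := Equiv.Perm.cycle_is_cycleOf hxc hc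
      rw [← per_eq_card_support_cycleOf g hfix, ← hcx, hcard]
  rw [key, Finset.card_biUnion]
  · rw [Finset.sum_congr rfl (fun c hc => (Finset.mem_filter.1 hc).2), Finset.sum_const, smul_eq_mul]
    exact Nat.mul_comm _ _
  · intro a ha b hb hab
    have := Equiv.Perm.cycleFactorsFinset_pairwise_disjoint g
      (Finset.mem_coe.2 (Finset.filter_subset _ _ ha))
      (Finset.mem_coe.2 (Finset.filter_subset _ _ hb)) hab
    exact Equiv.Perm.Disjoint.disjoint_support this

lemma natcard_per_eq (d : ℕ) (hd : d ≠ 1) :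
    Nat.card {x : Fin m // per g x = d} = d * cyc g d := by
  classical
  rw [Nat.card_eq_fintype_card, Fintype.card_subtype, card_per_filter g d hd]

lemma natcard_per_one :
    Nat.card {x : Fin m // per g x = 1} = 1 * cyc g 1 := by
  classical
  rw [Nat.card_eq_fintype_card, Fintype.card_subtype, cyc, if_pos rfl, one_mul]
  congr 1
  apply Finset.filter_congr
  intro x _
  constructor
  · intro h; exact Function.minimalPeriod_eq_one_iff_isFixedPt.1 h
  · intro h; exact Function.minimalPeriod_eq_one_iff_isFixedPt.2 h

lemma natcard_per (d : ℕ) :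
    Nat.card {x : Fin m // per g x = d} = d * cyc g d := by
  by_cases hd : d = 1
  · subst hd; exact natcard_per_one g
  · exact natcard_per_eq g d hd

lemma natCard_sigma {ι : Type} [Fintype ι] (f : ι → Type) [∀ i, Finite (f i)] :
    Nat.card (Σ i, f i) = ∑ i : ι, Nat.card (f i) := by
  classical
  haveI : ∀ i, Fintype (f i) := fun i => Fintype.ofFinite _
  simp [Nat.card_eq_fintype_card, Fintype.card_sigma]

/-- the set of orbits of points of period `d`. -/
abbrev Omega (d : ℕ) : Type := {s : Set (Fin m) // ∃ x, per g x = d ∧ Orb g x = s}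

lemma card_orbfiber (d : ℕ) (s : Omega g d) :
    Nat.card {x : Fin m // per g x = d ∧ Orb g x = s.1} = d := by
  obtain ⟨x₀, hx₀d, hx₀⟩ := s.2
  have e : {x : Fin m // per g x = d ∧ Orb g x = s.1} ≃ Orb g x₀ := by
    refine ⟨fun p => ⟨p.1, ?_⟩, fun y => ⟨y.1, ?_, ?_⟩, fun p => Subtype.ext rfl,
      fun y => Subtype.ext rfl⟩
    · have : Orb g p.1 = Orb g x₀ := by rw [p.2.2, ← hx₀]
      rw [← this]; exact mem_orb_self g p.1
    · rw [per_eq_of_mem_orb g y.2]; exact hx₀d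
    · rw [orb_eq_of_mem g y.2, hx₀]
  rw [Nat.card_congr e, card_orb g hx₀d]

lemma card_omega (d : ℕ) (hd : 0 < d) : Nat.card (Omega g d) = cyc g d := by
  classical
  have hfib := Equiv.sigmaFiberEquiv
    (fun x : {x : Fin m // per g x = d} => (⟨Orb g x.1, x.1, x.2, rfl⟩ : Omega g d))
  haveI : Fintype (Omega g d) := Fintype.ofFinite _
  have h1 : Nat.card {x : Fin m // per g x = d}
      = ∑ s : Omega g d, Nat.card {x : {x : Fin m // per g x = d} //
          (⟨Orb g x.1, x.1, x.2, rfl⟩ : Omega g d) = s} := by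
    rw [← Nat.card_congr hfib, natCard_sigma]
  have h2 : ∀ s : Omega g d, Nat.card {x : {x : Fin m // per g x = d} //
      (⟨Orb g x.1, x.1, x.2, rfl⟩ : Omega g d) = s} = d := by
    intro s
    have e : {x : {x : Fin m // per g x = d} //
        (⟨Orb g x.1, x.1, x.2, rfl⟩ : Omega g d) = s}
        ≃ {x : Fin m // per g x = d ∧ Orb g x = s.1} := by
      refine ⟨fun p => ⟨p.1.1, p.1.2, ?_⟩, fun q => ⟨⟨q.1, q.2.1⟩, ?_⟩, ?_, ?_⟩
      · exact congrArg Subtype.val p.2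
      · exact Subtype.ext q.2.2
      · intro p; exact Subtype.ext (Subtype.ext rfl)
      · intro q; exact Subtype.ext rfl
    rw [Nat.card_congr e, card_orbfiber g d s]
  rw [natcard_per g d] at h1
  rw [Finset.sum_congr rfl (fun s _ => h2 s), Finset.sum_const, smul_eq_mul] at h1
  have := h1
  rw [Finset.card_univ, ← Nat.card_eq_fintype_card] at this
  exact Nat.eq_of_mul_eq_mul_left hd (by rw [this, Nat.mul_comm])

section ModArith

variable {ℓ : ℕ} [NeZero ℓ]

lemma lpos : 0 < ℓ := Nat.pos_of_ne_zero (NeZero.ne ℓ)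

lemma val_nsmul (j : ℕ) (k : Fin ℓ) : ((j • k : Fin ℓ)).val = j * k.val % ℓ := by
  induction j with
  | zero => simp
  | succ j ih =>
    rw [succ_nsmul, Fin.val_add, ih, Nat.mod_add_mod, Nat.succ_mul]

lemma solve_cong (k ℓ' t : ℕ) (hl : 0 < ℓ') : ∃ j : ℕ, j * k ≡ Nat.gcd k ℓ' * t [MOD ℓ'] := by
  have hb := Nat.gcd_eq_gcd_ab k ℓ'
  set a := Nat.gcdA k ℓ' with ha
  have hnn : (0:ℤ) ≤ (a * t) % ℓ' := Int.emod_nonneg _ (by exact_mod_cast hl.ne')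
  refine ⟨((a * t) % ℓ').toNat, ?_⟩
  rw [Nat.modEq_iff_dvd, Nat.cast_mul, Nat.cast_mul, Int.toNat_of_nonneg hnn]
  have key : (Nat.gcd k ℓ' : ℤ) * t - ((a * t) % ℓ') * k
      = ℓ' * (Nat.gcdB k ℓ' * t) + (ℓ' * ((a * t) / ℓ')) * k := by
    rw [Int.emod_def, hb]; ring
  rw [key]
  exact dvd_add (Dvd.intro _ rfl) (Dvd.dvd.mul_right (Dvd.intro _ rfl) _)

lemma nsmul_eq_nsmul_iff (k : Fin ℓ) (j j' : ℕ) :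
    j • k = j' • k ↔ j ≡ j' [MOD ℓ / Nat.gcd k.val ℓ] := by
  set e := Nat.gcd k.val ℓ with he
  have he0 : 0 < e := Nat.gcd_pos_of_pos_right _ lpos
  have hself : e * (ℓ / e) = ℓ := Nat.mul_div_cancel' (Nat.gcd_dvd_right _ _)
  have hk : e * (k.val / e) = k.val := Nat.mul_div_cancel' (Nat.gcd_dvd_left _ _)
  have hcop : Nat.Coprime (k.val / e) (ℓ / e) := Nat.coprime_div_gcd_div_gcd he0
  constructor
  · intro h
    have hv : j * k.val % ℓ = j' * k.val % ℓ := by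
      have := congrArg Fin.val h; rwa [val_nsmul, val_nsmul] at this
    have hmod2 : e * (j * (k.val / e)) ≡ e * (j' * (k.val / e)) [MOD e * (ℓ / e)] := by
      have h1 : e * (j * (k.val / e)) = j * k.val := by rw [Nat.mul_left_comm, hk]
      have h2 : e * (j' * (k.val / e)) = j' * k.val := by rw [Nat.mul_left_comm, hk]
      rw [hself, h1, h2]
      exact hv
    have hmod3 := Nat.ModEq.mul_left_cancel' he0.ne' hmod2
    exact Nat.ModEq.cancel_right_of_coprime (Nat.Coprime.symm hcop) hmod3
  · intro h
    rw [Nat.modEq_iff_dvd] at h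
    have goal2 : (ℓ:ℤ) ∣ ((j' * k.val : ℕ) : ℤ) - ((j * k.val : ℕ) : ℤ) := by
      obtain ⟨q, hq⟩ := h
      have hke : (k.val : ℤ) = (e:ℤ) * ((k.val / e : ℕ) : ℤ) := by exact_mod_cast hk.symm
      have hle : (ℓ:ℤ) = (e:ℤ) * ((ℓ / e : ℕ) : ℤ) := by exact_mod_cast hself.symm
      have expand : ((j' * k.val : ℕ) : ℤ) - ((j * k.val : ℕ) : ℤ)
          = ((j':ℤ) - (j:ℤ)) * (k.val : ℤ) := by push_cast; ring
      rw [expand, hq, hke, hle]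
      exact ⟨q * ((k.val / e : ℕ) : ℤ), by ring⟩
    have hv : j * k.val ≡ j' * k.val [MOD ℓ] := by
      rw [Nat.modEq_iff_dvd]; exact goal2
    exact Fin.ext (by rw [val_nsmul, val_nsmul]; exact hv)

/-- the residue of `i` mod `gcd k ℓ`, as an element of `Fin ℓ`. -/
def res (k i : Fin ℓ) : Fin ℓ :=
  ⟨i.val % Nat.gcd k.val ℓ,
    lt_of_lt_of_le (Nat.mod_lt _ (Nat.gcd_pos_of_pos_right _ lpos))
      (Nat.le_of_dvd lpos (Nat.gcd_dvd_right _ _))⟩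

lemma exists_decomp (k i : Fin ℓ) : ∃ j : ℕ, res k i + j • k = i := by
  set e := Nat.gcd k.val ℓ with he
  obtain ⟨j, hj⟩ := solve_cong k.val ℓ (i.val / e) lpos
  refine ⟨j, Fin.ext ?_⟩
  rw [Fin.val_add, val_nsmul]
  show (i.val % e + j * k.val % ℓ) % ℓ = i.val
  rw [Nat.add_mod_mod]
  have h2 : (i.val % e + j * k.val) % ℓ = (i.val % e + e * (i.val / e)) % ℓ :=
    Nat.ModEq.add_left _ hj
  rw [h2, Nat.mod_add_div, Nat.mod_eq_of_lt i.isLt]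

lemma res_add_nsmul (k r : Fin ℓ) (j : ℕ) :
    (r + j • k).val % (Nat.gcd k.val ℓ) = r.val % Nat.gcd k.val ℓ := by
  set e := Nat.gcd k.val ℓ with he
  rw [Fin.val_add, val_nsmul]
  rw [Nat.mod_mod_of_dvd _ (Nat.gcd_dvd_right k.val ℓ)]
  rw [Nat.add_mod, Nat.mod_mod_of_dvd _ (Nat.gcd_dvd_right k.val ℓ)]
  have hz : j * k.val % e = 0 := by
    obtain ⟨q, hq⟩ := Nat.gcd_dvd_left k.val ℓ
    rw [show j * k.val = e * (j * q) by rw [hq]; ring]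
    exact Nat.mul_mod_right e (j * q)
  rw [hz, Nat.add_zero, Nat.mod_mod_of_dvd _ dvd_rfl]

lemma nsmul_gcd_mul_eq_zero (k : Fin ℓ) : (ℓ / Nat.gcd k.val ℓ) • k = 0 := by
  have h := (nsmul_eq_nsmul_iff k (ℓ / Nat.gcd k.val ℓ) 0).2 (by
    show _ ≡ _ [MOD _]
    simpa using (Nat.modEq_zero_iff_dvd).2 dvd_rfl)
  simpa using h

end ModArith

section TupleCount

variable {ℓ m : ℕ} [NeZero ℓ] (g : Equiv.Perm (Fin m)) (k : Fin ℓ)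

/-- tuples intertwining the rotation by `k` with `g`. -/
def Tk : Type :=
  {f : Fin ℓ → Fin m // Function.Injective f ∧ ∀ i, g (f i) = f (i + k)}

instance : Finite (Tk g k) := by unfold Tk; infer_instance

/-- inclusion `Fin (gcd k ℓ) → Fin ℓ`. -/
def incl (r : Fin (Nat.gcd k.val ℓ)) : Fin ℓ :=
  ⟨r.val, lt_of_lt_of_le r.isLt (Nat.le_of_dvd lpos (Nat.gcd_dvd_right _ _))⟩

/-- the residue of `i`, as element of `Fin (gcd k ℓ)`. -/
def resE (i : Fin ℓ) : Fin (Nat.gcd k.val ℓ) :=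
  ⟨i.val % Nat.gcd k.val ℓ, Nat.mod_lt _ (Nat.gcd_pos_of_pos_right _ lpos)⟩

lemma incl_resE (i : Fin ℓ) : incl k (resE k i) = res k i := rfl

/-- the set of "seeds": functions on residues with period-d values in distinct orbits. -/
def Hs : Type :=
  {h : Fin (Nat.gcd k.val ℓ) → Fin m //
    (∀ r, per g (h r) = ℓ / Nat.gcd k.val ℓ) ∧
    ∀ r r', Orb g (h r) = Orb g (h r') → r = r'}

instance : Finite (Hs g k) := by unfold Hs; infer_instance

lemma iterate_tuple (f : Tk g k) (j : ℕ) (i : Fin ℓ) :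
    f.1 (i + j • k) = (g ^ j) (f.1 i) := by
  induction j with
  | zero => simp
  | succ j ih =>
    rw [succ_nsmul, ← add_assoc, pow_succ', Equiv.Perm.mul_apply, ← ih]
    exact (f.2.2 (i + j • k)).symm

lemma per_tuple (f : Tk g k) (i : Fin ℓ) :
    per g (f.1 i) = ℓ / Nat.gcd k.val ℓ := by
  set d := ℓ / Nat.gcd k.val ℓ with hd
  have h1 : per g (f.1 i) ∣ d := by
    apply per_dvd_of_pow_eq
    rw [← iterate_tuple g k f d i, nsmul_gcd_mul_eq_zero, add_zero]
  have h2 : d ∣ per g (f.1 i) := by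
    have h3 : f.1 (i + per g (f.1 i) • k) = f.1 (i + 0 • k) := by
      rw [iterate_tuple, iterate_tuple, pow_zero, pow_per]
      rfl
    have h4 : i + per g (f.1 i) • k = i + 0 • k := f.2.1 h3
    have h5 : per g (f.1 i) • k = 0 • k := by
      exact add_left_cancel h4
    have h6 := (nsmul_eq_nsmul_iff k _ _).1 h5
    exact (Nat.modEq_zero_iff_dvd).1 h6
  exact Nat.dvd_antisymm h1 h2

lemma orb_of_pow_eq_pow {x y : Fin m} (a b : ℕ) (h : (g ^ a) x = (g ^ b) y) :
    y ∈ Orb g x := by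
  refine ⟨b * (orderOf g - 1) + a, ?_⟩
  rw [pow_add, Equiv.Perm.mul_apply, h, ← Equiv.Perm.mul_apply, ← pow_add]
  have h1 : b * (orderOf g - 1) + b = b * orderOf g := by
    rw [← Nat.mul_succ, Nat.succ_eq_add_one, Nat.sub_add_cancel (orderOf_pos g)]
  rw [h1, pow_mul', pow_orderOf_eq_one, one_pow, Equiv.Perm.one_apply]

/-- restriction of a tuple to its seed. -/
def toSeed (f : Tk g k) : Hs g k := by
  refine ⟨fun r => f.1 (incl k r), fun r => per_tuple g k f _, fun r r' hOrb => ?_⟩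
  have h1 : f.1 (incl k r') ∈ Orb g (f.1 (incl k r)) := by
    rw [hOrb]; exact mem_orb_self g _
  obtain ⟨n, hn⟩ := h1
  rw [← iterate_tuple g k f n (incl k r)] at hn
  have h2 := f.2.1 hn
  have h3 := congrArg (fun i : Fin ℓ => i.val % Nat.gcd k.val ℓ) h2
  simp only [res_add_nsmul] at h3
  apply Fin.ext
  have hr : (incl k r).val % Nat.gcd k.val ℓ = r.val := Nat.mod_eq_of_lt r.isLt
  have hr' : (incl k r').val % Nat.gcd k.val ℓ = r'.val := Nat.mod_eq_of_lt r'.isLt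
  rw [hr, hr'] at h3
  exact h3

lemma toSeed_bijective : Function.Bijective (toSeed g k) := by
  constructor
  · intro f f' hff
    have hcomp : ∀ r, f.1 (incl k r) = f'.1 (incl k r) :=
      fun r => congrFun (congrArg Subtype.val hff) r
    apply Subtype.ext
    funext i
    obtain ⟨j, hj⟩ := exists_decomp k i
    rw [← incl_resE] at hj
    rw [← hj, iterate_tuple, iterate_tuple, hcomp]
  · intro h
    have hjfun : ∀ i : Fin ℓ, res k i + (Classical.choose (exists_decomp k i)) • k = i :=
      fun i => Classical.choose_spec (exists_decomp k i)
    set jf : Fin ℓ → ℕ := fun i => Classical.choose (exists_decomp k i) with hjf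
    set f : Fin ℓ → Fin m := fun i => (g ^ jf i) (h.1 (resE k i)) with hf
    have W : ∀ (i : Fin ℓ) (j : ℕ) (r : Fin (Nat.gcd k.val ℓ)), incl k r + j • k = i →
        f i = (g ^ j) (h.1 r) := by
      intro i j r hij
      have hres : resE k i = r := by
        apply Fin.ext
        have h0 : (incl k r + j • k).val % Nat.gcd k.val ℓ
            = (incl k r).val % Nat.gcd k.val ℓ := res_add_nsmul k (incl k r) j
        show i.val % Nat.gcd k.val ℓ = r.val
        rw [← hij, h0]
        exact Nat.mod_eq_of_lt r.isLt
      have h1 : incl k r + jf i • k = i := by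
        rw [← hres]; exact hjfun i
      have hsm : jf i • k = j • k := add_left_cancel (h1.trans hij.symm)
      have hmod := (nsmul_eq_nsmul_iff k _ _).1 hsm
      show (g ^ jf i) (h.1 (resE k i)) = (g ^ j) (h.1 r)
      rw [hres]
      exact (pow_eq_pow_iff_modEq g _ _ _).2 (by rw [h.2.1 r]; exact hmod)
    have hinj : Function.Injective f := by
      intro i i' hii
      have Wi := W i (jf i) (resE k i) (hjfun i)
      have Wi' := W i' (jf i') (resE k i') (hjfun i')
      rw [Wi, Wi'] at hii
      have horb : h.1 (resE k i') ∈ Orb g (h.1 (resE k i)) :=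
        orb_of_pow_eq_pow g _ _ hii
      have hres : resE k i = resE k i' :=
        (h.2.2 _ _ (orb_eq_of_mem g horb)).symm
      rw [← hres] at hii
      have hmod := (pow_eq_pow_iff_modEq g _ _ _).1 hii
      rw [h.2.1 (resE k i)] at hmod
      have hsm : jf i • k = jf i' • k := (nsmul_eq_nsmul_iff k _ _).2 hmod
      calc i = res k i + jf i • k := (hjfun i).symm
        _ = incl k (resE k i) + jf i' • k := by rw [hsm]; rfl
        _ = incl k (resE k i') + jf i' • k := by rw [hres]
        _ = i' := hjfun i'
    have htw : ∀ i, g (f i) = f (i + k) := by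
      intro i
      have hik : incl k (resE k i) + (jf i + 1) • k = i + k := by
        rw [succ_nsmul, ← add_assoc]
        exact congrArg (· + k) (hjfun i)
      rw [W (i + k) (jf i + 1) (resE k i) hik,
        W i (jf i) (resE k i) (hjfun i), pow_succ', Equiv.Perm.mul_apply]
    refine ⟨⟨f, hinj, htw⟩, ?_⟩
    apply Subtype.ext
    funext r
    show f (incl k r) = h.1 r
    rw [W (incl k r) 0 r (by rw [zero_nsmul, add_zero])]
    simp

end TupleCount

section HCount

variable {ℓ m : ℕ} [NeZero ℓ] (g : Equiv.Perm (Fin m)) (k : Fin ℓ)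

/-- the orbit-selection map. -/
noncomputable def seedEmb (h : Hs g k) :
    Fin (Nat.gcd k.val ℓ) ↪ Omega g (ℓ / Nat.gcd k.val ℓ) := by
  refine ⟨fun r => ⟨Orb g (h.1 r), h.1 r, h.2.1 r, rfl⟩, ?_⟩
  intro r r' hq
  exact h.2.2 r r' (congrArg Subtype.val hq)

noncomputable def fiber_equiv (q : Fin (Nat.gcd k.val ℓ) ↪ Omega g (ℓ / Nat.gcd k.val ℓ)) :
    {p : Hs g k // seedEmb g k p = q}
      ≃ ∀ r : Fin (Nat.gcd k.val ℓ),
        {x : Fin m // per g x = ℓ / Nat.gcd k.val ℓ ∧ Orb g x = (q r).1} := by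
  refine ⟨fun p r => ⟨p.1.1 r, p.1.2.1 r, ?_⟩, fun c => ⟨⟨fun r => (c r).1, ?_, ?_⟩, ?_⟩, ?_, ?_⟩
  · exact congrArg Subtype.val (DFunLike.congr_fun p.2 r)
  · exact fun r => (c r).2.1
  · intro r r' hOrb
    apply q.injective
    apply Subtype.ext
    rw [← (c r).2.2, ← (c r').2.2]
    exact hOrb
  · apply DFunLike.ext
    intro r
    exact Subtype.ext (c r).2.2
  · intro p
    apply Subtype.ext
    apply Subtype.ext
    rfl
  · intro c
    funext r
    exact Subtype.ext rfl

lemma card_Hs :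
    Nat.card (Hs g k) = Nat.descFactorial (cyc g (ℓ / Nat.gcd k.val ℓ)) (Nat.gcd k.val ℓ)
      * (ℓ / Nat.gcd k.val ℓ) ^ (Nat.gcd k.val ℓ) := by
  classical
  set e := Nat.gcd k.val ℓ with he
  set d := ℓ / e with hd
  have hd0 : 0 < d := Nat.div_pos (Nat.le_of_dvd lpos (Nat.gcd_dvd_right _ _))
    (Nat.gcd_pos_of_pos_right _ lpos)
  haveI : Fintype (Omega g d) := Fintype.ofFinite _
  haveI : Fintype (Fin e ↪ Omega g d) := Fintype.ofFinite _
  have h1 : Nat.card (Hs g k) = ∑ q : Fin e ↪ Omega g d,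
      Nat.card {p : Hs g k // seedEmb g k p = q} := by
    rw [← Nat.card_congr (Equiv.sigmaFiberEquiv (seedEmb g k)), natCard_sigma]
  have h2 : ∀ q : Fin e ↪ Omega g d, Nat.card {p : Hs g k // seedEmb g k p = q} = d ^ e := by
    intro q
    rw [Nat.card_congr (fiber_equiv g k q), Nat.card_pi]
    rw [Finset.prod_congr rfl (fun r _ => card_orbfiber g d (q r))]
    rw [Finset.prod_const, Finset.card_univ, Fintype.card_fin]
  rw [h1, Finset.sum_congr rfl (fun q _ => h2 q), Finset.sum_const, smul_eq_mul,
    Finset.card_univ, Fintype.card_embedding_eq, Fintype.card_fin,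
    ← Nat.card_eq_fintype_card, card_omega g d hd0]

lemma card_Tk :
    Nat.card (Tk g k) = Nat.descFactorial (cyc g (ℓ / Nat.gcd k.val ℓ)) (Nat.gcd k.val ℓ)
      * (ℓ / Nat.gcd k.val ℓ) ^ (Nat.gcd k.val ℓ) := by
  rw [Nat.card_eq_of_bijective _ (toSeed_bijective g k)]
  exact card_Hs g k

end HCount

section StepA

instance tupFinite (ℓ m : ℕ) : Finite (Tup ℓ m) := by unfold Tup; infer_instance

instance cycFinite (ℓ m : ℕ) [NeZero ℓ] : Finite (Cyc ℓ m) := Quot.finite _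

lemma cycRel_equivalence (ℓ m : ℕ) [NeZero ℓ] : Equivalence (cycRel ℓ m) := by
  constructor
  · intro a
    exact ⟨0, fun i => by rw [add_zero]⟩
  · rintro a b ⟨k, hk⟩
    refine ⟨-k, fun i => ?_⟩
    rw [hk (i + -k), neg_add_cancel_right]
  · rintro a b c ⟨k, hk⟩ ⟨k', hk'⟩
    refine ⟨k' + k, fun i => ?_⟩
    rw [hk' i, hk (i + k'), add_assoc]

lemma cycRel_of_mk_eq {ℓ m : ℕ} [NeZero ℓ] {a b : Tup ℓ m}
    (h : Quot.mk (cycRel ℓ m) a = Quot.mk (cycRel ℓ m) b) : cycRel ℓ m a b :=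
  ((cycRel_equivalence ℓ m).eqvGen_iff).1 (Quot.eq.1 h)

/-- all pairs (tuple, rotation) intertwining with `g`. -/
def FF (ℓ : ℕ) {m : ℕ} [NeZero ℓ] (g : Equiv.Perm (Fin m)) : Type :=
  {p : (Fin ℓ → Fin m) × Fin ℓ // Function.Injective p.1 ∧ ∀ i, g (p.1 i) = p.1 (i + p.2)}

instance ffFinite (ℓ m : ℕ) [NeZero ℓ] (g : Equiv.Perm (Fin m)) : Finite (FF ℓ g) := by
  unfold FF; infer_instance

def ffEquivSigma (ℓ m : ℕ) [NeZero ℓ] (g : Equiv.Perm (Fin m)) :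
    FF ℓ g ≃ Σ k : Fin ℓ, Tk g k :=
  ⟨fun p => ⟨p.1.2, ⟨p.1.1, p.2⟩⟩, fun q => ⟨(q.2.1, q.1), q.2.2⟩,
    fun p => rfl, fun q => rfl⟩

def toFix {ℓ m : ℕ} [NeZero ℓ] (g : Equiv.Perm (Fin m)) (p : FF ℓ g) :
    {x : Cyc ℓ m // act g x = x} :=
  ⟨Quot.mk _ ⟨p.1.1, p.2.1⟩, by
    show Quot.mk _ _ = Quot.mk _ _
    exact (Quot.sound ⟨p.1.2, fun i => p.2.2 i⟩).symm⟩

lemma card_fiber_toFix {ℓ m : ℕ} [NeZero ℓ] (g : Equiv.Perm (Fin m))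
    (y : {x : Cyc ℓ m // act g x = x}) :
    Nat.card {p : FF ℓ g // toFix g p = y} = ℓ := by
  obtain ⟨t₀, ht₀⟩ := Quot.exists_rep y.1
  have hfixed : Quot.mk (cycRel ℓ m) ⟨g ∘ t₀.1, (Equiv.injective g).comp t₀.2⟩
      = Quot.mk (cycRel ℓ m) t₀ := by
    have h1 : act g y.1 = y.1 := y.2
    rw [← ht₀] at h1
    exact h1
  obtain ⟨k₀, hk₀pre⟩ := (cycRel_equivalence ℓ m).symm (cycRel_of_mk_eq hfixed)
  have hk₀ : ∀ i, g (t₀.1 i) = t₀.1 (i + k₀) := fun i => hk₀pre i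
  let Ψ : Fin ℓ → {p : FF ℓ g // toFix g p = y} := fun s =>
    ⟨⟨(fun i => t₀.1 (i + s), k₀), t₀.2.comp (add_left_injective s), fun i => by
        show g (t₀.1 (i + s)) = t₀.1 (i + k₀ + s)
        rw [hk₀ (i + s), add_right_comm]⟩,
      Subtype.ext (by
        show Quot.mk _ _ = y.1
        rw [← ht₀]
        exact Quot.sound ⟨-s, fun i => by
          show t₀.1 i = t₀.1 (i + -s + s)
          rw [neg_add_cancel_right]⟩)⟩
  have hbij : Function.Bijective Ψ := by
    constructor
    · intro s s' hss
      have h0 : t₀.1 (0 + s) = t₀.1 (0 + s') :=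
        congrFun (congrArg (fun p => p.1.1.1) hss) 0
      rw [zero_add, zero_add] at h0
      exact t₀.2 h0
    · rintro ⟨⟨⟨f, kp⟩, hinj, htw⟩, hfib⟩
      have htw' : ∀ i, g (f i) = f (i + kp) := htw
      have hinj' : Function.Injective f := hinj
      have hmk : Quot.mk (cycRel ℓ m) (⟨f, hinj⟩ : Tup ℓ m) = Quot.mk (cycRel ℓ m) t₀ := by
        have h1 : (toFix g ⟨(f, kp), hinj, htw⟩).1 = y.1 := congrArg Subtype.val hfib
        rw [← ht₀] at h1
        exact h1
      obtain ⟨s, hspre⟩ := (cycRel_equivalence ℓ m).symm (cycRel_of_mk_eq hmk)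
      have hs : ∀ i, f i = t₀.1 (i + s) := fun i => hspre i
      have hkp : kp = k₀ := by
        have h1 : ∀ i, f (i + kp) = f (i + k₀) := by
          intro i
          rw [← htw' i, hs i, hs (i + k₀), hk₀ (i + s), add_right_comm]
        have h2 := hinj' (h1 0)
        rwa [zero_add, zero_add] at h2
      refine ⟨s, ?_⟩
      apply Subtype.ext
      apply Subtype.ext
      show ((fun i => t₀.1 (i + s), k₀) : (Fin ℓ → Fin m) × Fin ℓ) = (f, kp)
      refine Prod.ext ?_ ?_
      · exact (funext fun i => (hs i).symm)
      · exact hkp.symm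
  rw [← Nat.card_eq_of_bijective _ hbij, Nat.card_eq_fintype_card, Fintype.card_fin]

lemma card_fix_mul (ℓ m : ℕ) [NeZero ℓ] (g : Equiv.Perm (Fin m)) :
    Nat.card {x : Cyc ℓ m // act g x = x} * ℓ = ∑ k : Fin ℓ, Nat.card (Tk g k) := by
  classical
  haveI : Fintype {x : Cyc ℓ m // act g x = x} := Fintype.ofFinite _
  have h1 : Nat.card (FF ℓ g) = ∑ y : {x : Cyc ℓ m // act g x = x},
      Nat.card {p : FF ℓ g // toFix g p = y} := by
    rw [← Nat.card_congr (Equiv.sigmaFiberEquiv (toFix g)), natCard_sigma]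
  rw [Finset.sum_congr rfl (fun y _ => card_fiber_toFix g y), Finset.sum_const,
    smul_eq_mul, Finset.card_univ, ← Nat.card_eq_fintype_card] at h1
  have h2 : Nat.card (FF ℓ g) = ∑ k : Fin ℓ, Nat.card (Tk g k) := by
    rw [Nat.card_congr (ffEquivSigma ℓ m g), natCard_sigma]
  rw [← h1, h2]

end StepA

lemma key_nat (ℓ m : ℕ) [NeZero ℓ] (g : Equiv.Perm (Fin m)) :
    Nat.card {x : Cyc ℓ m // act g x = x} * ℓ
      = ∑ d ∈ ℓ.divisors,
          Nat.totient d * (d ^ (ℓ / d) * Nat.descFactorial (cyc g d) (ℓ / d)) := by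
  classical
  rw [card_fix_mul ℓ m g]
  have h1 : ∀ k : Fin ℓ, Nat.card (Tk g k)
      = Nat.descFactorial (cyc g (ℓ / Nat.gcd ℓ k.val)) (Nat.gcd ℓ k.val)
        * (ℓ / Nat.gcd ℓ k.val) ^ (Nat.gcd ℓ k.val) := by
    intro k
    rw [Nat.gcd_comm]
    exact card_Tk g k
  rw [Finset.sum_congr rfl (fun k _ => h1 k)]
  rw [Fin.sum_univ_eq_sum_range (fun k =>
    Nat.descFactorial (cyc g (ℓ / Nat.gcd ℓ k)) (Nat.gcd ℓ k)
      * (ℓ / Nat.gcd ℓ k) ^ (Nat.gcd ℓ k)) ℓ]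
  rw [← Finset.sum_fiberwise_of_maps_to (g := fun k => Nat.gcd ℓ k)
      (t := ℓ.divisors)
      (fun x _ => Nat.mem_divisors.2 ⟨Nat.gcd_dvd_left ℓ x, NeZero.ne ℓ⟩)
      (fun k => Nat.descFactorial (cyc g (ℓ / Nat.gcd ℓ k)) (Nat.gcd ℓ k)
        * (ℓ / Nat.gcd ℓ k) ^ (Nat.gcd ℓ k))]
  have h2 : ∀ e ∈ ℓ.divisors,
      (∑ k ∈ Finset.filter (fun k => Nat.gcd ℓ k = e) (Finset.range ℓ),
        Nat.descFactorial (cyc g (ℓ / Nat.gcd ℓ k)) (Nat.gcd ℓ k)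
          * (ℓ / Nat.gcd ℓ k) ^ (Nat.gcd ℓ k))
      = Nat.totient (ℓ / e)
          * (Nat.descFactorial (cyc g (ℓ / e)) e * (ℓ / e) ^ e) := by
    intro e he
    rw [Finset.sum_congr rfl (fun k hk => by
      rw [(Finset.mem_filter.1 hk).2])]
    rw [Finset.sum_const, smul_eq_mul, ← Nat.totient_div_of_dvd (Nat.mem_divisors.1 he).1]
  rw [Finset.sum_congr rfl h2]
  have h3 : ∀ e ∈ ℓ.divisors,
      Nat.totient (ℓ / e) * (Nat.descFactorial (cyc g (ℓ / e)) e * (ℓ / e) ^ e)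
      = (fun d => Nat.totient d
          * (Nat.descFactorial (cyc g d) (ℓ / d) * d ^ (ℓ / d))) (ℓ / e) := by
    intro e he
    obtain ⟨hdvd, -⟩ := Nat.mem_divisors.1 he
    have hdd : ℓ / (ℓ / e) = e := Nat.div_div_self hdvd (NeZero.ne ℓ)
    simp only [hdd]
  rw [Finset.sum_congr rfl h3, Nat.sum_div_divisors ℓ
    (fun d => Nat.totient d * (Nat.descFactorial (cyc g d) (ℓ / d) * d ^ (ℓ / d)))]
  exact Finset.sum_congr rfl (fun d _ => by ring)

end CharProofAux

/-- The character of the permutation representation of `S_m` on the set `Γ_ℓ^m` of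
`ℓ`-cycles of `[1, m]` (i.e. the number of fixed points of `g` on `Γ_ℓ^m`) is given by a
polynomial in `X₁, …, X_ℓ` independent of `m`:
`χ(g) = φ(ℓ)X_ℓ(g) + ∑_{ed = ℓ, e ≠ 1} φ(d)(dᵉ/ℓ)·X_d(g)(X_d(g)−1)⋯(X_d(g)−e+1)`. -/
theorem char_perm_rep_cyc (ℓ m : ℕ) [NeZero ℓ] (g : Equiv.Perm (Fin m)) :
    (Nat.card {x : Cyc ℓ m // act g x = x} : ℚ) =
      Nat.totient ℓ * cyc g ℓ +
        ∑ d ∈ ℓ.divisors.erase ℓ,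
          (Nat.totient d : ℚ) * ((d : ℚ) ^ (ℓ / d) / ℓ) *
            Nat.descFactorial (cyc g d) (ℓ / d) := by
  classical
  have hl0 : 0 < ℓ := CharProofAux.lpos
  have hℓ : (ℓ:ℚ) ≠ 0 := Nat.cast_ne_zero.2 (NeZero.ne ℓ)
  apply mul_right_cancel₀ hℓ
  have key := CharProofAux.key_nat ℓ m g
  have hmem : ℓ ∈ ℓ.divisors := Nat.mem_divisors_self ℓ (NeZero.ne ℓ)
  calc (Nat.card {x : Cyc ℓ m // act g x = x} : ℚ) * ℓ
      = ((Nat.card {x : Cyc ℓ m // act g x = x} * ℓ : ℕ) : ℚ) := by push_cast; ring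
    _ = ((∑ d ∈ ℓ.divisors,
          Nat.totient d * (d ^ (ℓ / d) * Nat.descFactorial (cyc g d) (ℓ / d)) : ℕ) : ℚ) := by
        rw [key]
    _ = ∑ d ∈ ℓ.divisors, (Nat.totient d : ℚ)
          * ((d:ℚ) ^ (ℓ / d) * (Nat.descFactorial (cyc g d) (ℓ / d) : ℚ)) := by
        push_cast; ring
    _ = (Nat.totient ℓ : ℚ) * ((ℓ:ℚ) ^ (ℓ / ℓ) * (Nat.descFactorial (cyc g ℓ) (ℓ / ℓ) : ℚ))
          + ∑ d ∈ ℓ.divisors.erase ℓ, (Nat.totient d : ℚ)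
            * ((d:ℚ) ^ (ℓ / d) * (Nat.descFactorial (cyc g d) (ℓ / d) : ℚ)) := by
        rw [← Finset.insert_erase hmem, Finset.sum_insert (Finset.notMem_erase _ _)]
        rw [Finset.insert_erase hmem]
    _ = (↑(Nat.totient ℓ) * ↑(cyc g ℓ) +
          ∑ d ∈ ℓ.divisors.erase ℓ,
            (Nat.totient d : ℚ) * ((d : ℚ) ^ (ℓ / d) / ℓ) *
              (Nat.descFactorial (cyc g d) (ℓ / d) : ℚ)) * ℓ := by
        rw [add_mul, Finset.sum_mul]
        congr 1
        · rw [Nat.div_self hl0, Nat.descFactorial_one, pow_one]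
          ring
        · refine Finset.sum_congr rfl (fun d hd => ?_)
          field_simp
end

section
/- Let ν ⊢ n be a partition and μ ⊢ m (m ≥ n) a partition occurring in Ind_{S_n × S_{m−n}}^{S_m}(V_ν ⊠ ℚ_{m−n}) (i.e., μ/ν is a horizontal strip). Then the weight of μ (the size of μ minus its first part) satisfies w(ν) ≤ w(μ) ≤ |ν|; moreover w(μ) = w(ν) iff μ is obtained by adding all m−n boxes to the first row, and w(μ) = |ν| iff m ≥ |ν| + ν₁ and μ = ν[m]. -/
/-- Let `ν ⊢ n` and `μ ⊢ m` (partitions written as antitone functions `ℕ → ℕ`, indexed from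
`0`, with finitely many nonzero parts) with `μ/ν` a horizontal strip (`ν i ≤ μ i` and
`μ (i+1) ≤ ν i`, i.e. `μ` occurs in `Ind_{S_n × S_{m−n}}^{S_m}(V_ν ⊠ ℚ_{m−n})`).
Writing `w(μ) = |μ| − μ₁` for the weight, we have `w(ν) ≤ w(μ) ≤ |ν|`; moreover
`w(μ) = w(ν)` iff `μ` is obtained from `ν` by adding all `m − n` boxes to the first row, and
`w(μ) = |ν|` iff `m ≥ |ν| + ν₁` and `μ = ν[m] = (m − |ν|, ν₁, ν₂, …)`. -/
theorem weight_bounds_of_horizontal_strip (n m : ℕ) (hnm : n ≤ m) (ν μ : ℕ → ℕ)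
    (hν : Antitone ν) (hμ : Antitone μ)
    (hν0 : ∀ i, n ≤ i → ν i = 0) (hμ0 : ∀ i, m ≤ i → μ i = 0)
    (hνsum : ∑ i ∈ Finset.range n, ν i = n) (hμsum : ∑ i ∈ Finset.range m, μ i = m)
    (hsub : ∀ i, ν i ≤ μ i) (hstrip : ∀ i, μ (i + 1) ≤ ν i) :
    (n - ν 0 ≤ m - μ 0 ∧ m - μ 0 ≤ n) ∧
      (m - μ 0 = n - ν 0 ↔ μ 0 = ν 0 + (m - n) ∧ ∀ i, 1 ≤ i → μ i = ν i) ∧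
      (m - μ 0 = n ↔ n + ν 0 ≤ m ∧ μ 0 = m - n ∧ ∀ i, μ (i + 1) = ν i) := by
  -- sum of ν over range m equals n
  have hνm : ∑ i ∈ Finset.range m, ν i = n := by
    rw [← Finset.sum_subset (Finset.range_subset_range.mpr hnm)
      (fun x _ hx => hν0 x (by simpa using hx))]
    exact hνsum
  -- split off first terms
  have hμ1 : μ 0 + ∑ i ∈ Finset.range m, μ (i + 1) = m := by
    have h1 : ∑ i ∈ Finset.range (m + 1), μ i = m := by
      rw [Finset.sum_range_succ, hμ0 m le_rfl, hμsum]
      omega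
    have h2 := Finset.sum_range_succ' μ m
    omega
  have hν1 : ν 0 + ∑ i ∈ Finset.range m, ν (i + 1) = n := by
    have h1 : ∑ i ∈ Finset.range (m + 1), ν i = n := by
      rw [Finset.sum_range_succ, hν0 m hnm, hνm]
      omega
    have h2 := Finset.sum_range_succ' ν m
    omega
  have hS1 : ∑ i ∈ Finset.range m, ν (i + 1) ≤ ∑ i ∈ Finset.range m, μ (i + 1) :=
    Finset.sum_le_sum fun i _ => hsub (i + 1)
  have hS2 : ∑ i ∈ Finset.range m, μ (i + 1) ≤ ∑ i ∈ Finset.range m, ν i :=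
    Finset.sum_le_sum fun i _ => hstrip i
  refine ⟨by omega, ⟨?_, ?_⟩, ⟨?_, ?_⟩⟩
  · -- forward of first iff
    intro h
    have hSeq : ∑ i ∈ Finset.range m, ν (i + 1) = ∑ i ∈ Finset.range m, μ (i + 1) := by omega
    have hterm := (Finset.sum_eq_sum_iff_of_le (fun i _ => hsub (i + 1))).mp hSeq
    refine ⟨by omega, fun i hi => ?_⟩
    obtain ⟨j, rfl⟩ := Nat.exists_eq_add_of_le hi
    rw [Nat.add_comm]
    rcases lt_or_ge j m with hj | hj
    · exact (hterm j (Finset.mem_range.mpr hj)).symm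
    · rw [hμ0 _ (by omega), hν0 _ (by omega)]
  · -- backward of first iff
    rintro ⟨h0, hi⟩
    have hSeq : ∑ i ∈ Finset.range m, μ (i + 1) = ∑ i ∈ Finset.range m, ν (i + 1) :=
      Finset.sum_congr rfl fun i _ => hi (i + 1) (by omega)
    omega
  · -- forward of second iff
    intro h
    have hSeq : ∑ i ∈ Finset.range m, μ (i + 1) = ∑ i ∈ Finset.range m, ν i := by omega
    have hterm := (Finset.sum_eq_sum_iff_of_le
      (f := fun i => μ (i + 1)) (g := fun i => ν i) (fun i _ => hstrip i)).mp hSeq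
    have hall : ∀ i, μ (i + 1) = ν i := by
      intro i
      rcases lt_or_ge i m with hi | hi
      · exact hterm i (Finset.mem_range.mpr hi)
      · rw [hμ0 _ (by omega), hν0 _ (by omega)]
    have h10 : μ 1 ≤ μ 0 := hμ (by omega)
    have h01 : μ 1 = ν 0 := hall 0
    exact ⟨by omega, by omega, hall⟩
  · -- backward of second iff
    rintro ⟨_, h0, hi⟩
    have hSeq : ∑ i ∈ Finset.range m, μ (i + 1) = ∑ i ∈ Finset.range m, ν i :=
      Finset.sum_congr rfl fun i _ => hi i
    omega
end
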